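/- arXiv:1301.1518 — 6 statements merged into one kernel-verified Lean document; each statement's English description precedes it below -/
import Mathlib

section
/- The derivation d maps the two-sided ideal J_K into itself: d(J_K) ⊆ J_K. Consequently d descends to a well-defined degree-1 differential on the quotient algebra R/𝓘_K = ℤ⟨u_1,…,u_m,t_1,…,t_m⟩/J_K. -/
/-!
STATEMENT 2: The (unique) degree-1 graded derivation `d` of the free noncommutative
`ℤ`-algebra `ℤ⟨u_1,…,u_m,t_1,…,t_m⟩` with `d(u_i) = 0`, `d(t_i) = u_i`, `d(1) = 0`
maps the two-sided ideal `J_K` into itself, and consequently descends to a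
well-defined differential on the quotient `R/𝓘_K`.

We model the generators by `Fin m ⊕ Fin m`, with `u i = ι (inl i)`, `t i = ι (inr i)`,
and `d` by an arbitrary `ℤ`-linear endomorphism satisfying the defining properties
(`d(u_i) = 0`, `d(t_i) = u_i`, `d(1) = 0` and the graded Leibniz rule on homogeneous
elements); the conclusion is stated for every such `d`.
-/

variable (m : ℕ)

/-- The free noncommutative `ℤ`-algebra on `u_1,…,u_m,t_1,…,t_m`. -/
abbrev FA (m : ℕ) : Type := FreeAlgebra ℤ (Fin m ⊕ Fin m)

/-- The generator `u i` (of degree `1`). -/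
def ugen {m : ℕ} (i : Fin m) : FA m := FreeAlgebra.ι ℤ (Sum.inl i)

/-- The generator `t i` (of degree `0`). -/
def tgen {m : ℕ} (i : Fin m) : FA m := FreeAlgebra.ι ℤ (Sum.inr i)

/-- The product `u_{i_1} ⋯ u_{i_k}` over `σ = {i_1 < ⋯ < i_k}`. -/
def uprod {m : ℕ} (σ : Finset (Fin m)) : FA m :=
  ((σ.sort (· ≤ ·)).map (fun i => ugen i)).prod

/-- The generating set of the ideal `J_K`: the commutation/square relations together
with the Stanley–Reisner monomials `u_σ`, `σ ∉ K`. -/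
def gens {m : ℕ} (K : Finset (Finset (Fin m))) : Set (FA m) :=
  {x | (∃ i, x = ugen i * tgen i - ugen i) ∨
       (∃ i, x = tgen i * ugen i) ∨
       (∃ i, x = tgen i * tgen i - tgen i) ∨
       (∃ i, x = ugen i * ugen i) ∨
       (∃ i j, i ≠ j ∧ x = ugen i * tgen j - tgen j * ugen i) ∨
       (∃ i j, i ≠ j ∧ x = ugen i * ugen j + ugen j * ugen i) ∨
       (∃ i j, i ≠ j ∧ x = tgen i * tgen j - tgen j * tgen i) ∨
       (∃ σ : Finset (Fin m), σ ∉ K ∧ x = uprod σ)}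

/-- The two-sided ideal `J_K` generated by `gens K`, as the additive span of the
elements `a * g * b` with `g` a generator. -/
def JK {m : ℕ} (K : Finset (Finset (Fin m))) : Submodule ℤ (FA m) :=
  Submodule.span ℤ {x | ∃ a g b, g ∈ gens K ∧ x = a * g * b}

/-- The homogeneous elements of degree `n` of the free algebra (where `u i` has
degree `1` and `t i` has degree `0`): the `ℤ`-span of the words whose number of
`u`-letters is `n`. -/
def homog {m : ℕ} (n : ℕ) : Submodule ℤ (FA m) :=
  Submodule.span ℤ
    {x | ∃ l : List (Fin m ⊕ Fin m),
      (l.filter Sum.isLeft).length = n ∧ x = (l.map (FreeAlgebra.ι ℤ)).prod}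

section Aux

variable {m : ℕ}

/-- The set of words in the generators. -/
def Wset (m : ℕ) : Set (FA m) :=
  {x | ∃ l : List (Fin m ⊕ Fin m), x = (l.map (FreeAlgebra.ι ℤ)).prod}

lemma word_mem_homog (l : List (Fin m ⊕ Fin m)) :
    (l.map (FreeAlgebra.ι ℤ)).prod ∈ homog (m := m) (l.filter Sum.isLeft).length :=
  Submodule.subset_span ⟨l, rfl, rfl⟩

lemma ugen_mem_homog (i : Fin m) : ugen i ∈ homog (m := m) 1 := by
  have := word_mem_homog (m := m) [Sum.inl i]
  have h : (([Sum.inl i] : List (Fin m ⊕ Fin m)).map (FreeAlgebra.ι ℤ)).prod ∈ homog (m := m) 1 := this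
  simpa [ugen] using h

lemma tgen_mem_homog (i : Fin m) : tgen i ∈ homog (m := m) 0 := by
  have := word_mem_homog (m := m) [Sum.inr i]
  simpa [tgen] using this

lemma mem_spanW (x : FA m) : x ∈ Submodule.span ℤ (Wset m) := by
  refine FreeAlgebra.induction ℤ _ ?_ ?_ ?_ ?_ x
  · intro r
    have h1 : (1 : FA m) ∈ Wset m := ⟨[], by simp⟩
    have : (algebraMap ℤ (FA m)) r = r • (1 : FA m) := by
      simp [Algebra.smul_def]
    rw [this]
    exact Submodule.smul_mem _ _ (Submodule.subset_span h1)
  · intro i; exact Submodule.subset_span ⟨[i], by simp⟩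
  · intro x y hx hy
    have hmul : Submodule.span ℤ (Wset m) * Submodule.span ℤ (Wset m)
        ≤ Submodule.span ℤ (Wset m) := by
      erw [Submodule.span_mul_span]
      apply Submodule.span_mono
      rintro _ ⟨a, ⟨la, rfl⟩, b, ⟨lb, rfl⟩, rfl⟩
      exact ⟨la ++ lb, by simp⟩
    exact hmul (Submodule.mul_mem_mul hx hy)
  · intro x y hx hy; exact Submodule.add_mem _ hx hy

lemma mem_JK {K : Finset (Finset (Fin m))} (a g b : FA m) (hg : g ∈ gens K) :
    a * g * b ∈ JK K :=
  Submodule.subset_span ⟨a, g, b, hg, rfl⟩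

lemma gen_mem_JK {K : Finset (Finset (Fin m))} {g : FA m} (hg : g ∈ gens K) :
    g ∈ JK K := by
  simpa using mem_JK 1 g 1 hg

lemma JK_mul {K : Finset (Finset (Fin m))} (a b : FA m) {x : FA m} (hx : x ∈ JK K) :
    a * x * b ∈ JK K := by
  induction hx using Submodule.span_induction with
  | mem x hx =>
      obtain ⟨a', g, b', hg, rfl⟩ := hx
      have := mem_JK (a * a') g (b' * b) hg
      simpa [mul_assoc] using this
  | zero => simpa using (JK K).zero_mem
  | add x y hx hy ihx ihy =>
      have : a * (x + y) * b = a * x * b + a * y * b := by noncomm_ring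
      rw [this]; exact Submodule.add_mem _ ihx ihy
  | smul r x hx ih =>
      have : a * (r • x) * b = r • (a * x * b) := by
        rw [mul_smul_comm, smul_mul_assoc]
      rw [this]; exact Submodule.smul_mem _ _ ih

end Aux

/-- The graded derivation `d` preserves `J_K`, and hence descends to a (unique)
`ℤ`-linear differential on the quotient `R/𝓘_K = FA m ⧸ J_K`. -/
theorem derivation_preserves_JK {m : ℕ} (K : Finset (Finset (Fin m)))
    (hKempty : (∅ : Finset (Fin m)) ∈ K)
    (hKdown : ∀ σ ∈ K, ∀ τ ⊆ σ, τ ∈ K)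
    (d : FA m →ₗ[ℤ] FA m)
    (hdu : ∀ i, d (ugen i) = 0)
    (hdt : ∀ i, d (tgen i) = ugen i)
    (hd1 : d 1 = 0)
    (hleib : ∀ (n : ℕ), ∀ x ∈ homog (m := m) n, ∀ y : FA m,
      d (x * y) = d x * y + ((-1 : ℤ) ^ n) • (x * d y)) :
    (∀ x ∈ JK K, d x ∈ JK K) ∧
    (∃! dbar : (FA m ⧸ JK K) →ₗ[ℤ] (FA m ⧸ JK K),
      dbar.comp (JK K).mkQ = (JK K).mkQ.comp d) := by
  
  classical
  -- d kills products of u's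
  have hword_u : ∀ l : List (Fin m), d ((l.map (fun i => ugen i)).prod) = 0 := by
    intro l
    induction l with
    | nil => simpa using hd1
    | cons i l ih =>
        have h := hleib 1 (ugen i) (ugen_mem_homog i) ((l.map (fun i => ugen i)).prod)
        simp only [List.map_cons, List.prod_cons]
        rw [h, hdu, ih]
        simp
  -- homogeneity of words of length two
  have hword2 : ∀ a b : Fin m ⊕ Fin m,
      FreeAlgebra.ι ℤ a * FreeAlgebra.ι ℤ b ∈
        homog (m := m) ([a, b].filter Sum.isLeft).length := by
    intro a b
    have := word_mem_homog (m := m) [a, b]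
    simpa using this
  -- each generator is homogeneous and d maps it into JK
  have hgen : ∀ g ∈ gens K, ∃ n, g ∈ homog (m := m) n ∧ d g ∈ JK K := by
    intro g hg
    rcases hg with ⟨i, rfl⟩ | ⟨i, rfl⟩ | ⟨i, rfl⟩ | ⟨i, rfl⟩ |
      ⟨i, j, hij, rfl⟩ | ⟨i, j, hij, rfl⟩ | ⟨i, j, hij, rfl⟩ | ⟨σ, hσ, rfl⟩
    · refine ⟨1, ?_, ?_⟩
      · have h1 := hword2 (Sum.inl i) (Sum.inr i)
        simp only [List.filter, Sum.isLeft] at h1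
        exact sub_mem (by simpa [ugen, tgen] using h1) (ugen_mem_homog i)
      · rw [map_sub, hleib 1 (ugen i) (ugen_mem_homog i) (tgen i), hdu, hdt]
        have : (0 : FA m) * tgen i + ((-1 : ℤ) ^ 1) • (ugen i * ugen i) - 0
            = -(ugen i * ugen i) := by
          simp
        rw [this]
        exact neg_mem (gen_mem_JK (Or.inr (Or.inr (Or.inr (Or.inl ⟨i, rfl⟩)))))
    · refine ⟨1, ?_, ?_⟩
      · have h1 := hword2 (Sum.inr i) (Sum.inl i)
        simp only [List.filter, Sum.isLeft] at h1
        simpa [ugen, tgen] using h1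
      · rw [hleib 0 (tgen i) (tgen_mem_homog i) (ugen i), hdt, hdu]
        have : ugen i * ugen i + ((-1 : ℤ) ^ 0) • (tgen i * (0 : FA m))
            = ugen i * ugen i := by simp
        rw [this]
        exact gen_mem_JK (Or.inr (Or.inr (Or.inr (Or.inl ⟨i, rfl⟩))))
    · refine ⟨0, ?_, ?_⟩
      · have h1 := hword2 (Sum.inr i) (Sum.inr i)
        simp only [List.filter, Sum.isLeft] at h1
        exact sub_mem (by simpa [tgen] using h1) (tgen_mem_homog i)
      · rw [map_sub, hleib 0 (tgen i) (tgen_mem_homog i) (tgen i), hdt]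
        have : ugen i * tgen i + ((-1 : ℤ) ^ 0) • (tgen i * ugen i) - ugen i
            = (ugen i * tgen i - ugen i) + tgen i * ugen i := by
          simp; abel
        rw [this]
        exact add_mem (gen_mem_JK (Or.inl ⟨i, rfl⟩))
          (gen_mem_JK (Or.inr (Or.inl ⟨i, rfl⟩)))
    · refine ⟨2, ?_, ?_⟩
      · have h1 := hword2 (Sum.inl i) (Sum.inl i)
        simp only [List.filter, Sum.isLeft] at h1
        simpa [ugen] using h1
      · rw [hleib 1 (ugen i) (ugen_mem_homog i) (ugen i), hdu]
        have : (0 : FA m) * ugen i + ((-1 : ℤ) ^ 1) • (ugen i * (0 : FA m))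
            = 0 := by simp
        rw [this]
        exact zero_mem _
    · refine ⟨1, ?_, ?_⟩
      · have h1 := hword2 (Sum.inl i) (Sum.inr j)
        have h2 := hword2 (Sum.inr j) (Sum.inl i)
        simp only [List.filter, Sum.isLeft] at h1 h2
        exact sub_mem (by simpa [ugen, tgen] using h1) (by simpa [ugen, tgen] using h2)
      · rw [map_sub, hleib 1 (ugen i) (ugen_mem_homog i) (tgen j),
          hleib 0 (tgen j) (tgen_mem_homog j) (ugen i), hdu, hdt]
        have : (0 : FA m) * tgen j + ((-1 : ℤ) ^ 1) • (ugen i * ugen j)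
            - (ugen j * ugen i + ((-1 : ℤ) ^ 0) • (tgen j * 0))
            = -(ugen i * ugen j + ugen j * ugen i) := by
          simp; abel
        rw [this]
        exact neg_mem (gen_mem_JK
          (Or.inr (Or.inr (Or.inr (Or.inr (Or.inr (Or.inl ⟨i, j, hij, rfl⟩)))))))
    · refine ⟨2, ?_, ?_⟩
      · have h1 := hword2 (Sum.inl i) (Sum.inl j)
        have h2 := hword2 (Sum.inl j) (Sum.inl i)
        simp only [List.filter, Sum.isLeft] at h1 h2
        exact add_mem (by simpa [ugen] using h1) (by simpa [ugen] using h2)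
      · rw [map_add, hleib 1 (ugen i) (ugen_mem_homog i) (ugen j),
          hleib 1 (ugen j) (ugen_mem_homog j) (ugen i), hdu, hdu]
        have : (0 : FA m) * ugen j + ((-1 : ℤ) ^ 1) • (ugen i * (0 : FA m))
            + ((0 : FA m) * ugen i + ((-1 : ℤ) ^ 1) • (ugen j * (0 : FA m))) = 0 := by
          simp
        rw [this]
        exact zero_mem _
    · refine ⟨0, ?_, ?_⟩
      · have h1 := hword2 (Sum.inr i) (Sum.inr j)
        have h2 := hword2 (Sum.inr j) (Sum.inr i)
        simp only [List.filter, Sum.isLeft] at h1 h2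
        exact sub_mem (by simpa [tgen] using h1) (by simpa [tgen] using h2)
      · rw [map_sub, hleib 0 (tgen i) (tgen_mem_homog i) (tgen j),
          hleib 0 (tgen j) (tgen_mem_homog j) (tgen i), hdt, hdt]
        have : ugen i * tgen j + ((-1 : ℤ) ^ 0) • (tgen i * ugen j)
            - (ugen j * tgen i + ((-1 : ℤ) ^ 0) • (tgen j * ugen i))
            = (ugen i * tgen j - tgen j * ugen i)
              - (ugen j * tgen i - tgen i * ugen j) := by
          simp; abel
        rw [this]
        refine sub_mem ?_ ?_
        · exact gen_mem_JK (Or.inr (Or.inr (Or.inr (Or.inr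
            (Or.inl ⟨i, j, hij, rfl⟩)))))
        · exact gen_mem_JK (Or.inr (Or.inr (Or.inr (Or.inr
            (Or.inl ⟨j, i, hij.symm, rfl⟩)))))
    · refine ⟨((((σ.sort (· ≤ ·)).map (Sum.inl : Fin m → Fin m ⊕ Fin m)).filter Sum.isLeft).length), ?_, ?_⟩
      · have h1 := word_mem_homog (m := m) ((σ.sort (· ≤ ·)).map (Sum.inl : Fin m → Fin m ⊕ Fin m))
        have e : (((σ.sort (· ≤ ·)).map (Sum.inl : Fin m → Fin m ⊕ Fin m)).map (FreeAlgebra.ι ℤ)).prod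
            = uprod σ := by
          rw [List.map_map]
          rfl
        rwa [e] at h1
      · rw [show d (uprod σ) = 0 from hword_u (σ.sort (· ≤ ·))]
        exact zero_mem _
  -- the key claim
  have main : ∀ g ∈ gens K, ∀ a b : FA m, d (a * g * b) ∈ JK K := by
    intro g hg a b
    obtain ⟨k, hgk, hdg⟩ := hgen g hg
    have ha := mem_spanW a
    induction ha using Submodule.span_induction with
    | mem w hw =>
        obtain ⟨l, rfl⟩ := hw
        rw [mul_assoc, hleib _ _ (word_mem_homog l) (g * b)]
        refine add_mem ?_ (Submodule.smul_mem _ _ ?_)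
        · rw [← mul_assoc]
          exact mem_JK _ _ _ hg
        · rw [hleib k g hgk b, mul_add, mul_smul_comm]
          refine add_mem ?_ (Submodule.smul_mem _ _ ?_)
          · rw [← mul_assoc]
            exact JK_mul _ _ hdg
          · rw [← mul_assoc]
            exact mem_JK _ _ _ hg
    | zero =>
        have : (0 : FA m) * g * b = 0 := by simp
        rw [this, map_zero]
        exact zero_mem _
    | add x y hx hy ihx ihy =>
        rw [add_mul, add_mul, map_add]
        exact add_mem ihx ihy
    | smul r x hx ih =>
        rw [smul_mul_assoc, smul_mul_assoc, map_smul]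
        exact Submodule.smul_mem _ _ ih
  have key : ∀ x ∈ JK K, d x ∈ JK K := by
    intro x hx
    induction hx using Submodule.span_induction with
    | mem x hx =>
        obtain ⟨a, g, b, hg, rfl⟩ := hx
        exact main g hg a b
    | zero => rw [map_zero]; exact zero_mem _
    | add x y hx hy ihx ihy => rw [map_add]; exact add_mem ihx ihy
    | smul r x hx ih => rw [map_smul]; exact Submodule.smul_mem _ _ ih
  refine ⟨key, ?_⟩
  have hle : JK K ≤ LinearMap.ker ((JK K).mkQ.comp d) := by
    intro x hx
    simp only [LinearMap.mem_ker, LinearMap.comp_apply, Submodule.mkQ_apply,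
      Submodule.Quotient.mk_eq_zero]
    exact key x hx
  refine ⟨(JK K).liftQ ((JK K).mkQ.comp d) hle, Submodule.liftQ_mkQ _ _ _, ?_⟩
  intro f hf
  apply LinearMap.ext
  intro z
  obtain ⟨x, rfl⟩ := Submodule.mkQ_surjective (JK K) z
  have h1 := LinearMap.congr_fun hf x
  have h2 := LinearMap.congr_fun (Submodule.liftQ_mkQ (JK K) ((JK K).mkQ.comp d) hle) x
  simp only [LinearMap.comp_apply, Submodule.mkQ_apply] at h1 h2 ⊢
  rw [h1, ← h2]
end

section
/- The set of images of the square-free monomials {u_σ t_τ : σ ∈ K, τ ⊆ [m], σ ∩ τ = ∅} is a ℤ-basis of the quotient algebra R/𝓘_K. -/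
/-- `t_τ = t_{j_1} ⋯ t_{j_l}` for `τ = {j_1 < ⋯ < j_l}`. -/
def tprodGen {m : ℕ} (τ : Finset (Fin m)) : FA m :=
  ((τ.sort (· ≤ ·)).map (fun j => tgen j)).prod

/-- The relation whose `RingQuot` is the quotient by the two-sided ideal `J_K`. -/
def relK {m : ℕ} (K : Finset (Finset (Fin m))) : FA m → FA m → Prop :=
  fun x y => x ∈ gens K ∧ y = 0

/-- The quotient algebra `R/𝓘_K`. -/
abbrev RI (m : ℕ) (K : Finset (Finset (Fin m))) : Type := RingQuot (relK (m := m) K)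

/-- The image `u_σ t_τ` of a square-free monomial in `R/𝓘_K`. -/
noncomputable def mono {m : ℕ} (K : Finset (Finset (Fin m))) (σ τ : Finset (Fin m)) :
    RI m K :=
  RingQuot.mkAlgHom ℤ (relK K) (uprod σ * tprodGen τ)


namespace SR

variable {m : ℕ} (K : Finset (Finset (Fin m)))

abbrev Idx (m : ℕ) (K : Finset (Finset (Fin m))) : Type :=
  {st : Finset (Fin m) × Finset (Fin m) // st.1 ∈ K ∧ Disjoint st.1 st.2}

abbrev Md (m : ℕ) (K : Finset (Finset (Fin m))) : Type := Idx m K →₀ ℤ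

def sgn (σ : Finset (Fin m)) (i : Fin m) : ℤ := (-1) ^ ((σ.filter (fun j => j < i)).card)

lemma erase_insert_self (a : Fin m) (s : Finset (Fin m)) :
    (insert a s).erase a = s.erase a := by
  ext x; simp only [Finset.mem_erase, Finset.mem_insert]; tauto

noncomputable def uAct (i : Fin m) (st : Idx m K) : Md m K :=
  if h : i ∉ st.1.1 ∧ insert i st.1.1 ∈ K then
    sgn st.1.1 i • Finsupp.single
      (⟨(insert i st.1.1, st.1.2.erase i),
        ⟨h.2, Finset.disjoint_insert_left.mpr
          ⟨Finset.notMem_erase i _, (st.2.2).mono_right (Finset.erase_subset _ _)⟩⟩⟩ : Idx m K) 1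
  else 0

noncomputable def tAct (i : Fin m) (st : Idx m K) : Md m K :=
  if h : i ∈ st.1.1 then 0
  else Finsupp.single
    (⟨(st.1.1, insert i st.1.2),
      ⟨st.2.1, Finset.disjoint_insert_right.mpr ⟨h, st.2.2⟩⟩⟩ : Idx m K) 1

noncomputable def uOp (i : Fin m) : Md m K →ₗ[ℤ] Md m K :=
  Finsupp.lsum ℤ fun st => LinearMap.toSpanSingleton ℤ _ (uAct K i st)

noncomputable def tOp (i : Fin m) : Md m K →ₗ[ℤ] Md m K :=
  Finsupp.lsum ℤ fun st => LinearMap.toSpanSingleton ℤ _ (tAct K i st)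

@[simp] lemma uOp_single (i : Fin m) (st : Idx m K) (b : ℤ) :
    uOp K i (Finsupp.single st b) = b • uAct K i st := by
  simp [uOp, Finsupp.lsum_single, LinearMap.toSpanSingleton_apply]

@[simp] lemma tOp_single (i : Fin m) (st : Idx m K) (b : ℤ) :
    tOp K i (Finsupp.single st b) = b • tAct K i st := by
  simp [tOp, Finsupp.lsum_single, LinearMap.toSpanSingleton_apply]

lemma single_congr {x y : Idx m K} (h : x.1 = y.1) :
    (Finsupp.single x (1:ℤ)) = Finsupp.single y 1 := by
  cases Subtype.ext h; rfl


lemma R1 (i : Fin m) (st : Idx m K) : uOp K i (tAct K i st) = uAct K i st := by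
  obtain ⟨⟨σ, τ⟩, hσ, hd⟩ := st
  unfold tAct uAct
  by_cases h : i ∈ σ
  · simp [h]
  · rw [dif_neg h]
    simp only [uOp_single, one_smul]
    unfold uAct
    by_cases h2 : i ∉ σ ∧ insert i σ ∈ K
    · rw [dif_pos h2, dif_pos h2]
      congr 1
      exact single_congr K (by simp [erase_insert_self])
    · rw [dif_neg h2, dif_neg h2]

lemma R2 (i : Fin m) (st : Idx m K) : tOp K i (uAct K i st) = 0 := by
  obtain ⟨⟨σ, τ⟩, hσ, hd⟩ := st
  unfold uAct
  by_cases h : i ∉ σ ∧ insert i σ ∈ K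
  · rw [dif_pos h]
    rw [map_smul, tOp_single]
    unfold tAct
    rw [dif_pos (Finset.mem_insert_self i σ)]
    simp
  · rw [dif_neg h, map_zero]

lemma R3 (i : Fin m) (st : Idx m K) : tOp K i (tAct K i st) = tAct K i st := by
  obtain ⟨⟨σ, τ⟩, hσ, hd⟩ := st
  unfold tAct
  by_cases h : i ∈ σ
  · simp [h]
  · rw [dif_neg h, tOp_single, one_smul]
    unfold tAct
    rw [dif_neg h]
    exact single_congr K (by simp [Finset.insert_idem])

lemma R4 (i : Fin m) (st : Idx m K) : uOp K i (uAct K i st) = 0 := by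
  obtain ⟨⟨σ, τ⟩, hσ, hd⟩ := st
  unfold uAct
  by_cases h : i ∉ σ ∧ insert i σ ∈ K
  · rw [dif_pos h, map_smul, uOp_single]
    simp [uAct]
  · rw [dif_neg h, map_zero]

lemma R5 {i j : Fin m} (hij : i ≠ j) (st : Idx m K) :
    uOp K i (tAct K j st) = tOp K j (uAct K i st) := by
  obtain ⟨⟨σ, τ⟩, hσ, hd⟩ := st
  unfold tAct uAct
  by_cases hj : j ∈ σ
  · rw [dif_pos hj, map_zero]
    by_cases h : i ∉ σ ∧ insert i σ ∈ K
    · rw [dif_pos h, map_smul, tOp_single]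
      unfold tAct
      rw [dif_pos (Finset.mem_insert_of_mem hj)]
      simp
    · rw [dif_neg h, map_zero]
  · rw [dif_neg hj, uOp_single, one_smul]
    unfold uAct
    by_cases h : i ∉ σ ∧ insert i σ ∈ K
    · rw [dif_pos h, dif_pos h, map_smul, tOp_single, one_smul]
      unfold tAct
      have hj' : j ∉ insert i σ := by simp [Ne.symm hij, hj]
      rw [dif_neg hj']
      congr 1
      exact single_congr K (by simp [Finset.erase_insert_of_ne (Ne.symm hij)])
    · rw [dif_neg h, dif_neg h, map_zero]

lemma R7 {i j : Fin m} (hij : i ≠ j) (st : Idx m K) :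
    tOp K i (tAct K j st) = tOp K j (tAct K i st) := by
  obtain ⟨⟨σ, τ⟩, hσ, hd⟩ := st
  unfold tAct
  by_cases hj : j ∈ σ <;> by_cases hi : i ∈ σ
  · rw [dif_pos hj, dif_pos hi, map_zero, map_zero]
  · rw [dif_pos hj, dif_neg hi, map_zero, tOp_single, one_smul]
    unfold tAct
    rw [dif_pos hj]
  · rw [dif_neg hj, dif_pos hi, map_zero, tOp_single, one_smul]
    unfold tAct
    rw [dif_pos hi]
  · rw [dif_neg hj, dif_neg hi, tOp_single, tOp_single, one_smul, one_smul]
    unfold tAct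
    rw [dif_neg hi, dif_neg hj]
    exact single_congr K (by simp [Finset.insert_comm])

lemma sgn_insert {σ : Finset (Fin m)} {j : Fin m} (i : Fin m) (hj : j ∉ σ) :
    sgn (insert j σ) i = (if j < i then -1 else 1) * sgn σ i := by
  unfold sgn
  rw [Finset.filter_insert]
  split_ifs with h
  · rw [Finset.card_insert_of_notMem (by simp [hj]), pow_succ]
    ring
  · ring

lemma uOp_uAct (hKdown : ∀ σ ∈ K, ∀ τ ⊆ σ, τ ∈ K) (i j : Fin m) (st : Idx m K) :
    uOp K i (uAct K j st) =
      if h : i ∉ st.1.1 ∧ j ∉ st.1.1 ∧ i ≠ j ∧ insert i (insert j st.1.1) ∈ K then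
        (sgn st.1.1 j * sgn (insert j st.1.1) i) •
          Finsupp.single (⟨(insert i (insert j st.1.1), (st.1.2.erase j).erase i),
            ⟨h.2.2.2, by
              refine Finset.disjoint_insert_left.mpr ⟨Finset.notMem_erase _ _,
                Finset.disjoint_insert_left.mpr ⟨?_, st.2.2.mono_right
                  ((Finset.erase_subset _ _).trans (Finset.erase_subset _ _))⟩⟩
              exact fun hmem =>
                (Finset.notMem_erase j st.1.2) (Finset.mem_of_mem_erase hmem)⟩⟩ : Idx m K) 1
      else 0 := by
  obtain ⟨⟨σ, τ⟩, hσ, hd⟩ := st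
  unfold uAct
  by_cases hj : j ∉ σ ∧ insert j σ ∈ K
  · rw [dif_pos hj, map_smul, uOp_single, one_smul]
    unfold uAct
    by_cases h2 : i ∉ insert j σ ∧ insert i (insert j σ) ∈ K
    · have hcond : i ∉ σ ∧ j ∉ σ ∧ i ≠ j ∧ insert i (insert j σ) ∈ K := by
        refine ⟨fun hi => h2.1 (Finset.mem_insert_of_mem hi), hj.1,
          fun hij => h2.1 (hij ▸ Finset.mem_insert_self i σ), h2.2⟩
      rw [dif_pos h2, dif_pos hcond, smul_smul]
    · have hcond : ¬(i ∉ σ ∧ j ∉ σ ∧ i ≠ j ∧ insert i (insert j σ) ∈ K) := by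
        rintro ⟨hi, hjσ, hij, hbig⟩
        exact h2 ⟨by simp [hij, hi], hbig⟩
      rw [dif_neg h2, dif_neg hcond, smul_zero]
  · rw [dif_neg hj, map_zero]
    have hcond : ¬(i ∉ σ ∧ j ∉ σ ∧ i ≠ j ∧ insert i (insert j σ) ∈ K) := by
      rintro ⟨hi, hjσ, hij, hbig⟩
      exact hj ⟨hjσ, hKdown _ hbig _ (Finset.subset_insert _ _)⟩
    rw [dif_neg hcond]

lemma R6 (hKdown : ∀ σ ∈ K, ∀ τ ⊆ σ, τ ∈ K) {i j : Fin m} (hij : i ≠ j) (st : Idx m K) :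
    uOp K i (uAct K j st) = - uOp K j (uAct K i st) := by
  have smul_single_eq_neg : ∀ {x y : Idx m K}, x.1 = y.1 → ∀ {a b : ℤ}, a = -b →
      a • Finsupp.single x (1:ℤ) = -(b • Finsupp.single y 1) := by
    intro x y h a b hab
    cases Subtype.ext h
    rw [hab, neg_smul]
  obtain ⟨⟨σ, τ⟩, hσ, hd⟩ := st
  rw [uOp_uAct K hKdown i j, uOp_uAct K hKdown j i]
  by_cases h : i ∉ σ ∧ j ∉ σ ∧ i ≠ j ∧ insert i (insert j σ) ∈ K
  · have h' : j ∉ σ ∧ i ∉ σ ∧ j ≠ i ∧ insert j (insert i σ) ∈ K := by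
      refine ⟨h.2.1, h.1, h.2.2.1.symm, ?_⟩
      rw [Finset.insert_comm]; exact h.2.2.2
    rw [dif_pos h, dif_pos h']
    refine smul_single_eq_neg ?_ ?_
    · show (insert i (insert j σ), (τ.erase j).erase i) = _
      simp [Finset.insert_comm, Finset.erase_right_comm]
    · rw [sgn_insert i h.2.1, sgn_insert j h.1]
      rcases hij.lt_or_gt with hlt | hlt
      · rw [if_neg (asymm hlt), if_pos hlt]; ring
      · rw [if_pos hlt, if_neg (asymm hlt)]; ring
  · have h' : ¬(j ∉ σ ∧ i ∉ σ ∧ j ≠ i ∧ insert j (insert i σ) ∈ K) := by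
      rintro ⟨h1, h2, h3, h4⟩
      exact h ⟨h2, h1, h3.symm, by rw [Finset.insert_comm]; exact h4⟩
    rw [dif_neg h, dif_neg h', neg_zero]

def Ul (l : List (Fin m)) : FA m := (l.map (fun i => ugen i)).prod
def Tl (l : List (Fin m)) : FA m := (l.map (fun i => tgen i)).prod

lemma Ul_cons (i : Fin m) (l : List (Fin m)) : Ul (i :: l) = ugen i * Ul l := rfl
lemma Tl_cons (i : Fin m) (l : List (Fin m)) : Tl (i :: l) = tgen i * Tl l := rfl
lemma Ul_nil : Ul ([] : List (Fin m)) = 1 := rfl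
lemma Tl_nil : Tl ([] : List (Fin m)) = 1 := rfl
lemma uprod_eq (σ : Finset (Fin m)) : uprod σ = Ul (σ.sort (· ≤ ·)) := rfl
lemma tprod_eq (τ : Finset (Fin m)) : tprodGen τ = Tl (τ.sort (· ≤ ·)) := rfl

noncomputable def piA : FA m →ₐ[ℤ] Module.End ℤ (Md m K) :=
  FreeAlgebra.lift ℤ (Sum.elim (uOp K) (tOp K))

@[simp] lemma piA_u (i : Fin m) : piA K (ugen i) = uOp K i := by
  simp [piA, ugen]

@[simp] lemma piA_t (i : Fin m) : piA K (tgen i) = tOp K i := by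
  simp [piA, tgen]

lemma op_ext {f g : Module.End ℤ (Md m K)}
    (h : ∀ st : Idx m K, f (Finsupp.single st 1) = g (Finsupp.single st 1)) : f = g := by
  refine Finsupp.lhom_ext fun st b => ?_
  have hb : (Finsupp.single st b : Md m K) = b • Finsupp.single st 1 := by
    rw [Finsupp.smul_single, smul_eq_mul, mul_one]
  rw [hb, map_smul, map_smul, h]

lemma piU_span (l : List (Fin m)) (st : Idx m K) :
    piA K (Ul l) (Finsupp.single st 1) ∈
      Submodule.span ℤ {x : Md m K | ∃ st' : Idx m K,
        l.toFinset ⊆ st'.1.1 ∧ x = Finsupp.single st' 1} := by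
  induction l generalizing st with
  | nil =>
    refine Submodule.subset_span ⟨st, by simp, ?_⟩
    simp [Ul_nil]
  | cons i l ih =>
    rw [Ul_cons, map_mul, Module.End.mul_apply]
    have key : Submodule.span ℤ {x : Md m K | ∃ st' : Idx m K,
        l.toFinset ⊆ st'.1.1 ∧ x = Finsupp.single st' 1} ≤
        (Submodule.span ℤ {x : Md m K | ∃ st' : Idx m K,
          (i :: l).toFinset ⊆ st'.1.1 ∧ x = Finsupp.single st' 1}).comap (uOp K i) := by
      rw [Submodule.span_le]
      rintro x ⟨st', hsub, rfl⟩
      simp only [Submodule.mem_comap, SetLike.mem_coe, uOp_single, one_smul]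
      unfold uAct
      split_ifs with h
      · refine Submodule.smul_mem _ _ (Submodule.subset_span ⟨_, ?_, rfl⟩)
        simp only [List.toFinset_cons]
        exact Finset.insert_subset_insert _ hsub
      · exact Submodule.zero_mem _
    rw [piA_u]
    exact key (ih st)

lemma piA_uprod_zero (hKdown : ∀ σ ∈ K, ∀ τ ⊆ σ, τ ∈ K) {σ0 : Finset (Fin m)}
    (h0 : σ0 ∉ K) : piA K (uprod σ0) = 0 := by
  refine op_ext K fun st => ?_
  have hempty : {x : Md m K | ∃ st' : Idx m K,
      (σ0.sort (· ≤ ·)).toFinset ⊆ st'.1.1 ∧ x = Finsupp.single st' 1} = ∅ := by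
    ext x
    simp only [Set.mem_setOf_eq, Set.mem_empty_iff_false, iff_false, not_exists]
    rintro st' ⟨hsub, rfl⟩
    rw [Finset.sort_toFinset] at hsub
    exact h0 (hKdown _ st'.2.1 _ hsub)
  have hmem := piU_span K (σ0.sort (· ≤ ·)) st
  rw [hempty, Submodule.span_empty, Submodule.mem_bot] at hmem
  rw [uprod_eq, hmem, LinearMap.zero_apply]

lemma piA_rel (hKdown : ∀ σ ∈ K, ∀ τ ⊆ σ, τ ∈ K) :
    ∀ ⦃x y : FA m⦄, relK K x y → piA K x = piA K y := by
  rintro x y ⟨hx, rfl⟩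
  rw [map_zero]
  rcases hx with ⟨i, rfl⟩ | ⟨i, rfl⟩ | ⟨i, rfl⟩ | ⟨i, rfl⟩ | ⟨i, j, hij, rfl⟩ |
    ⟨i, j, hij, rfl⟩ | ⟨i, j, hij, rfl⟩ | ⟨σ0, h0, rfl⟩
  · rw [map_sub, map_mul, piA_u, piA_t, sub_eq_zero]
    refine op_ext K fun st => ?_
    rw [Module.End.mul_apply, tOp_single, one_smul, R1, uOp_single, one_smul]
  · rw [map_mul, piA_t, piA_u]
    refine op_ext K fun st => ?_
    rw [Module.End.mul_apply, uOp_single, one_smul, R2, LinearMap.zero_apply]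
  · rw [map_sub, map_mul, piA_t, sub_eq_zero]
    refine op_ext K fun st => ?_
    simp [Module.End.mul_apply, R3]
  · rw [map_mul, piA_u]
    refine op_ext K fun st => ?_
    rw [Module.End.mul_apply, uOp_single, one_smul, R4, LinearMap.zero_apply]
  · rw [map_sub, map_mul, map_mul, piA_u, piA_t, sub_eq_zero]
    refine op_ext K fun st => ?_
    rw [Module.End.mul_apply, Module.End.mul_apply, tOp_single, one_smul,
      uOp_single, one_smul, R5 K hij]
  · rw [map_add, map_mul, map_mul, piA_u, piA_u]
    refine op_ext K fun st => ?_
    rw [LinearMap.add_apply, Module.End.mul_apply, Module.End.mul_apply,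
      uOp_single, one_smul, uOp_single, one_smul, R6 K hKdown hij,
      neg_add_cancel, LinearMap.zero_apply]
  · rw [map_sub, map_mul, map_mul, sub_eq_zero]
    refine op_ext K fun st => ?_
    simp [Module.End.mul_apply, R7 K hij st]
  · exact piA_uprod_zero K hKdown h0


noncomputable def piQ (hKdown : ∀ σ ∈ K, ∀ τ ⊆ σ, τ ∈ K) :
    RI m K →ₐ[ℤ] Module.End ℤ (Md m K) :=
  RingQuot.liftAlgHom ℤ ⟨piA K, piA_rel K hKdown⟩

lemma piT_list : ∀ (l : List (Fin m)) (st st' : Idx m K),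
    (∀ x ∈ l, x ∉ st.1.1) → st'.1.1 = st.1.1 → st'.1.2 = st.1.2 ∪ l.toFinset →
    piA K (Tl l) (Finsupp.single st 1) = Finsupp.single st' 1 := by
  intro l
  induction l with
  | nil =>
    intro st st' _ h1 h2
    rw [Tl_nil, map_one, Module.End.one_apply]
    refine single_congr K (Prod.ext h1.symm ?_)
    rw [h2]; simp
  | cons j l ih =>
    intro st st' h h1 h2
    rw [Tl_cons, map_mul, Module.End.mul_apply]
    have hd2 : Disjoint st.1.1 (st.1.2 ∪ l.toFinset) := by
      refine Finset.disjoint_union_right.mpr ⟨st.2.2, ?_⟩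
      exact Finset.disjoint_left.mpr fun a ha hal =>
        h a (List.mem_cons_of_mem j (List.mem_toFinset.mp hal)) ha
    rw [ih st ⟨(st.1.1, st.1.2 ∪ l.toFinset), st.2.1, hd2⟩
      (fun x hx => h x (List.mem_cons_of_mem j hx)) rfl rfl]
    rw [piA_t, tOp_single, one_smul]
    unfold tAct
    rw [dif_neg (show j ∉ st.1.1 from h j (List.mem_cons_self))]
    refine single_congr K (Prod.ext h1.symm ?_)
    rw [h2, List.toFinset_cons, Finset.union_insert]

lemma piU_list (hKdown : ∀ σ ∈ K, ∀ τ ⊆ σ, τ ∈ K) :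
    ∀ (l : List (Fin m)), l.Pairwise (· < ·) → ∀ (st st' : Idx m K),
    st.1.1 = ∅ → l.toFinset ∈ K → Disjoint l.toFinset st.1.2 →
    st'.1.1 = l.toFinset → st'.1.2 = st.1.2 →
    piA K (Ul l) (Finsupp.single st 1) = Finsupp.single st' 1 := by
  intro l
  induction l with
  | nil =>
    intro _ st st' hσ _ _ h1 h2
    rw [Ul_nil, map_one, Module.End.one_apply]
    refine single_congr K (Prod.ext ?_ h2.symm)
    rw [hσ, h1]; rfl
  | cons i l ih =>
    intro hl st st' hσ hmem hd h1 h2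
    have hil : ∀ x ∈ l, i < x := (List.pairwise_cons.mp hl).1
    have hsub : l.toFinset ⊆ (i :: l).toFinset := by
      rw [List.toFinset_cons]; exact Finset.subset_insert _ _
    have hmem' : l.toFinset ∈ K := hKdown _ hmem _ hsub
    have hd' : Disjoint l.toFinset st.1.2 := hd.mono_left hsub
    rw [Ul_cons, map_mul, Module.End.mul_apply,
      ih (List.pairwise_cons.mp hl).2 st ⟨(l.toFinset, st.1.2), hmem', hd'⟩ hσ hmem' hd' rfl rfl]
    rw [piA_u, uOp_single, one_smul]
    unfold uAct
    have hni : i ∉ l.toFinset := fun hmem'' =>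
      lt_irrefl i (hil i (List.mem_toFinset.mp hmem''))
    have hik : insert i l.toFinset ∈ K := by
      rw [← List.toFinset_cons]; exact hmem
    rw [dif_pos (show i ∉ (⟨(l.toFinset, st.1.2), hmem', hd'⟩ : Idx m K).1.1 ∧ _ from ⟨hni, hik⟩)]
    have hsgn : sgn l.toFinset i = 1 := by
      unfold sgn
      rw [Finset.filter_eq_empty_iff.mpr fun {x} hx =>
        not_lt.mpr (hil x (List.mem_toFinset.mp hx)).le, Finset.card_empty, pow_zero]
    rw [hsgn, one_smul]
    refine single_congr K (Prod.ext ?_ ?_)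
    · rw [h1, List.toFinset_cons]
    · rw [h2]
      refine Finset.erase_eq_of_notMem ?_
      exact fun hiτ => Finset.disjoint_left.mp hd (by simp [List.toFinset_cons]) hiτ

noncomputable def base (hKempty : (∅ : Finset (Fin m)) ∈ K) : Idx m K :=
  ⟨(∅, ∅), hKempty, by simp⟩

lemma piQ_mono (hKdown : ∀ σ ∈ K, ∀ τ ⊆ σ, τ ∈ K)
    (hKempty : (∅ : Finset (Fin m)) ∈ K) {σ τ : Finset (Fin m)}
    (hσ : σ ∈ K) (hd : Disjoint σ τ) :
    piQ K hKdown (mono K σ τ) (Finsupp.single (base K hKempty) 1) =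
      Finsupp.single (⟨(σ, τ), hσ, hd⟩ : Idx m K) 1 := by
  unfold mono piQ
  rw [RingQuot.liftAlgHom_mkAlgHom_apply, map_mul, Module.End.mul_apply]
  rw [tprod_eq, piT_list K (τ.sort (· ≤ ·)) (base K hKempty)
    ⟨(∅, τ), hKempty, by simp⟩ (by simp [base]) rfl (by simp [base, Finset.sort_toFinset])]
  rw [uprod_eq]
  exact piU_list K hKdown _ ((Finset.sortedLT_sort σ).pairwise) _ _ rfl
    (by rw [Finset.sort_toFinset]; exact hσ) (by rw [Finset.sort_toFinset]; exact hd)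
    (Finset.sort_toFinset _ _).symm rfl

noncomputable abbrev mkq : FA m →ₐ[ℤ] RI m K := RingQuot.mkAlgHom ℤ (relK K)

lemma mkq_zero_of_gen {g : FA m} (hg : g ∈ gens K) : mkq K g = 0 := by
  have h := RingQuot.mkAlgHom_rel ℤ (show relK K g 0 from ⟨hg, rfl⟩)
  rwa [map_zero] at h

lemma eq1 (i : Fin m) : mkq K (ugen i) * mkq K (tgen i) = mkq K (ugen i) := by
  have h := mkq_zero_of_gen K (Or.inl ⟨i, rfl⟩)
  rwa [map_sub, map_mul, sub_eq_zero] at h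

lemma eq2 (i : Fin m) : mkq K (tgen i) * mkq K (ugen i) = 0 := by
  have h := mkq_zero_of_gen K (Or.inr (Or.inl ⟨i, rfl⟩))
  rwa [map_mul] at h

lemma eq3 (i : Fin m) : mkq K (tgen i) * mkq K (tgen i) = mkq K (tgen i) := by
  have h := mkq_zero_of_gen K (Or.inr (Or.inr (Or.inl ⟨i, rfl⟩)))
  rwa [map_sub, map_mul, sub_eq_zero] at h

lemma eq4 (i : Fin m) : mkq K (ugen i) * mkq K (ugen i) = 0 := by
  have h := mkq_zero_of_gen K (Or.inr (Or.inr (Or.inr (Or.inl ⟨i, rfl⟩))))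
  rwa [map_mul] at h

lemma eq5 {i j : Fin m} (hij : i ≠ j) :
    mkq K (ugen i) * mkq K (tgen j) = mkq K (tgen j) * mkq K (ugen i) := by
  have h := mkq_zero_of_gen K
    (Or.inr (Or.inr (Or.inr (Or.inr (Or.inl ⟨i, j, hij, rfl⟩)))))
  rwa [map_sub, map_mul, map_mul, sub_eq_zero] at h

lemma eq6 {i j : Fin m} (hij : i ≠ j) :
    mkq K (ugen i) * mkq K (ugen j) = -(mkq K (ugen j) * mkq K (ugen i)) := by
  have h := mkq_zero_of_gen K
    (Or.inr (Or.inr (Or.inr (Or.inr (Or.inr (Or.inl ⟨i, j, hij, rfl⟩))))))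
  rw [map_add, map_mul, map_mul] at h
  exact eq_neg_of_add_eq_zero_left h

lemma eq7 {i j : Fin m} (hij : i ≠ j) :
    mkq K (tgen i) * mkq K (tgen j) = mkq K (tgen j) * mkq K (tgen i) := by
  have h := mkq_zero_of_gen K
    (Or.inr (Or.inr (Or.inr (Or.inr (Or.inr (Or.inr (Or.inl ⟨i, j, hij, rfl⟩)))))))
  rwa [map_sub, map_mul, map_mul, sub_eq_zero] at h

lemma eq8 {σ : Finset (Fin m)} (h : σ ∉ K) : mkq K (uprod σ) = 0 :=
  mkq_zero_of_gen K (Or.inr (Or.inr (Or.inr (Or.inr (Or.inr (Or.inr (Or.inr ⟨σ, h, rfl⟩)))))))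

lemma Ul_perm {l₁ l₂ : List (Fin m)} (h : l₁.Perm l₂) :
    ∃ z : ℤ, mkq K (Ul l₁) = z • mkq K (Ul l₂) := by
  induction h with
  | nil => exact ⟨1, by simp⟩
  | cons x h ih =>
    obtain ⟨z, hz⟩ := ih
    exact ⟨z, by rw [Ul_cons, Ul_cons, map_mul, map_mul, hz, mul_smul_comm]⟩
  | swap x y l =>
    by_cases hxy : x = y
    · subst hxy; exact ⟨1, by rw [one_smul]⟩
    · refine ⟨-1, ?_⟩
      rw [show Ul (y :: x :: l) = ugen y * (ugen x * Ul l) from rfl,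
        show Ul (x :: y :: l) = ugen x * (ugen y * Ul l) from rfl,
        map_mul, map_mul, map_mul, map_mul, ← mul_assoc, ← mul_assoc,
        eq6 K (show y ≠ x from fun hc => hxy hc.symm)]
      noncomm_ring
      rw [smul_mul_assoc, mul_assoc]
  | trans h₁ h₂ ih₁ ih₂ =>
    obtain ⟨z₁, hz₁⟩ := ih₁
    obtain ⟨z₂, hz₂⟩ := ih₂
    exact ⟨z₁ * z₂, by rw [hz₁, hz₂, mul_smul]⟩

lemma Tl_perm {l₁ l₂ : List (Fin m)} (h : l₁.Perm l₂) :
    mkq K (Tl l₁) = mkq K (Tl l₂) := by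
  induction h with
  | nil => rfl
  | cons x h ih => rw [Tl_cons, Tl_cons, map_mul, map_mul, ih]
  | swap x y l =>
    by_cases hxy : x = y
    · subst hxy; rfl
    · rw [show Tl (y :: x :: l) = tgen y * (tgen x * Tl l) from rfl,
        show Tl (x :: y :: l) = tgen x * (tgen y * Tl l) from rfl,
        map_mul, map_mul, map_mul, map_mul, ← mul_assoc, ← mul_assoc,
        eq7 K (fun hc => hxy hc.symm)]
  | trans h₁ h₂ ih₁ ih₂ => rw [ih₁, ih₂]

lemma tu_mixed (i : Fin m) : ∀ l : List (Fin m),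
    (i ∈ l → mkq K (tgen i) * mkq K (Ul l) = 0) ∧
    (i ∉ l → mkq K (tgen i) * mkq K (Ul l) = mkq K (Ul l) * mkq K (tgen i)) := by
  intro l
  induction l with
  | nil =>
    exact ⟨fun h => absurd h (List.not_mem_nil),
      fun _ => by rw [Ul_nil, map_one, one_mul, mul_one]⟩
  | cons j l ih =>
    by_cases hij : i = j
    · subst hij
      refine ⟨fun _ => ?_, fun hmem => absurd (List.mem_cons_self) hmem⟩
      rw [Ul_cons, map_mul, ← mul_assoc, eq2, zero_mul]
    · have hji : j ≠ i := fun h => hij h.symm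
      constructor
      · intro hmem
        have hil : i ∈ l := by
          rcases List.mem_cons.mp hmem with h | h
          · exact absurd h hij
          · exact h
        rw [Ul_cons, map_mul, ← mul_assoc, ← eq5 K hji, mul_assoc, ih.1 hil, mul_zero]
      · intro hmem
        have hil : i ∉ l := fun h => hmem (List.mem_cons_of_mem j h)
        rw [Ul_cons, map_mul, ← mul_assoc, ← eq5 K hji, mul_assoc, ih.2 hil,
          ← mul_assoc]

lemma ut_absorb (i : Fin m) : ∀ l : List (Fin m), i ∈ l →
    mkq K (Ul l) * mkq K (tgen i) = mkq K (Ul l) := by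
  intro l
  induction l with
  | nil => exact fun h => absurd h (List.not_mem_nil)
  | cons j l ih =>
    intro hmem
    by_cases hil : i ∈ l
    · rw [Ul_cons, map_mul, mul_assoc, ih hil]
    · have hij : i = j := by
        rcases List.mem_cons.mp hmem with h | h
        · exact h
        · exact absurd h hil
      subst hij
      rw [Ul_cons, map_mul, mul_assoc, ← (tu_mixed K i l).2 hil, ← mul_assoc, eq1]

lemma sort_perm_cons {i : Fin m} {s : Finset (Fin m)} (h : i ∈ s) :
    (s.sort (· ≤ ·)).Perm (i :: (s.erase i).sort (· ≤ ·)) := by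
  have h1 := Finset.sort_perm_toList (α := Fin m) s (· ≤ ·)
  have h3 := Finset.toList_insert (Finset.notMem_erase i s)
  rw [Finset.insert_erase h] at h3
  exact h1.trans (h3.trans (((Finset.sort_perm_toList (s.erase i) (· ≤ ·)).symm).cons i))

lemma sort_perm_insert {i : Fin m} {s : Finset (Fin m)} (h : i ∉ s) :
    ((insert i s).sort (· ≤ ·)).Perm (i :: s.sort (· ≤ ·)) := by
  have h1 := Finset.sort_perm_toList (α := Fin m) (insert i s) (· ≤ ·)
  have h3 := Finset.toList_insert h
  exact h1.trans (h3.trans (((Finset.sort_perm_toList s (· ≤ ·)).symm).cons i))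

lemma t_tprod (i : Fin m) (τ : Finset (Fin m)) :
    mkq K (tgen i) * mkq K (tprodGen τ) = mkq K (tprodGen (insert i τ)) := by
  by_cases hi : i ∈ τ
  · rw [Finset.insert_eq_self.mpr hi, tprod_eq, Tl_perm K (sort_perm_cons hi),
      Tl_cons, map_mul, ← mul_assoc, eq3]
  · rw [tprod_eq τ, tprod_eq (insert i τ), Tl_perm K (sort_perm_insert hi),
      Tl_cons, map_mul]

lemma u_uprod_mem (i : Fin m) (σ : Finset (Fin m)) (hi : i ∈ σ) :
    mkq K (ugen i) * mkq K (uprod σ) = 0 := by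
  obtain ⟨z, hz⟩ := Ul_perm K ((sort_perm_cons hi).cons i)
  have h2 : mkq K (Ul (i :: σ.sort (· ≤ ·))) = mkq K (ugen i) * mkq K (uprod σ) := by
    rw [Ul_cons, map_mul, uprod_eq]
  rw [← h2, hz,
    show Ul (i :: i :: (σ.erase i).sort (· ≤ ·)) =
      ugen i * (ugen i * Ul ((σ.erase i).sort (· ≤ ·))) from rfl,
    map_mul, map_mul, ← mul_assoc, eq4, zero_mul]
  exact smul_zero z

lemma u_uprod_not_mem (i : Fin m) (σ : Finset (Fin m)) (hi : i ∉ σ) :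
    ∃ z : ℤ, mkq K (ugen i) * mkq K (uprod σ) = z • mkq K (uprod (insert i σ)) := by
  obtain ⟨z, hz⟩ := Ul_perm K (sort_perm_insert hi).symm
  refine ⟨z, ?_⟩
  rw [uprod_eq σ, uprod_eq (insert i σ), ← map_mul, ← Ul_cons, hz]

noncomputable def fmon : Idx m K → RI m K := fun st => mono K st.1.1 st.1.2

lemma fmon_eq (st : Idx m K) :
    fmon K st = mkq K (uprod st.1.1) * mkq K (tprodGen st.1.2) := by
  rw [fmon, mono, ← map_mul]

lemma one_mem_span (hKempty : (∅ : Finset (Fin m)) ∈ K) :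
    (1 : RI m K) ∈ Submodule.span ℤ (Set.range (fmon K)) := by
  have h : fmon K ⟨(∅, ∅), hKempty, by simp⟩ = 1 := by
    rw [fmon_eq]
    rw [show uprod (∅ : Finset (Fin m)) = 1 from by simp [uprod],
      show tprodGen (∅ : Finset (Fin m)) = 1 from by simp [tprodGen], map_one, one_mul]
  exact h ▸ Submodule.subset_span ⟨_, rfl⟩

lemma t_mul_mem (i : Fin m) (st : Idx m K) :
    mkq K (tgen i) * fmon K st ∈ Submodule.span ℤ (Set.range (fmon K)) := by
  obtain ⟨⟨σ, τ⟩, hσ, hd⟩ := st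
  rw [fmon_eq]
  by_cases hi : i ∈ σ
  · rw [uprod_eq, ← mul_assoc,
      (tu_mixed K i _).1 ((Finset.mem_sort _).mpr hi), zero_mul]
    exact Submodule.zero_mem _
  · rw [uprod_eq, ← mul_assoc,
      (tu_mixed K i _).2 (fun hmem => hi ((Finset.mem_sort _).mp hmem)),
      mul_assoc, t_tprod K i τ]
    refine Submodule.subset_span
      ⟨⟨(σ, insert i τ), hσ, Finset.disjoint_insert_right.mpr ⟨hi, hd⟩⟩, ?_⟩
    rw [fmon_eq, uprod_eq]

lemma u_mul_mem (hKdown : ∀ σ ∈ K, ∀ τ ⊆ σ, τ ∈ K) (i : Fin m) (st : Idx m K) :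
    mkq K (ugen i) * fmon K st ∈ Submodule.span ℤ (Set.range (fmon K)) := by
  obtain ⟨⟨σ, τ⟩, hσ, hd⟩ := st
  rw [fmon_eq]
  by_cases hi : i ∈ σ
  · rw [← mul_assoc, u_uprod_mem K i σ hi, zero_mul]
    exact Submodule.zero_mem _
  obtain ⟨z, hz⟩ := u_uprod_not_mem K i σ hi
  rw [← mul_assoc, hz, smul_mul_assoc]
  by_cases hK' : insert i σ ∈ K
  · by_cases hiτ : i ∈ τ
    · have h1 : mkq K (tgen i) * mkq K (tprodGen (τ.erase i)) = mkq K (tprodGen τ) := by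
        rw [t_tprod, Finset.insert_erase hiτ]
      have h2 : mkq K (uprod (insert i σ)) * mkq K (tprodGen τ) =
          mkq K (uprod (insert i σ)) * mkq K (tprodGen (τ.erase i)) := by
        rw [← h1, ← mul_assoc, uprod_eq,
          ut_absorb K i _ ((Finset.mem_sort _).mpr (Finset.mem_insert_self i σ))]
      rw [h2]
      refine Submodule.smul_mem _ z (Submodule.subset_span
        ⟨⟨(insert i σ, τ.erase i), hK', Finset.disjoint_insert_left.mpr
          ⟨Finset.notMem_erase i τ, hd.mono_right (Finset.erase_subset _ _)⟩⟩, ?_⟩)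
      rw [fmon_eq]
    · refine Submodule.smul_mem _ z (Submodule.subset_span
        ⟨⟨(insert i σ, τ), hK', Finset.disjoint_insert_left.mpr ⟨hiτ, hd⟩⟩, ?_⟩)
      rw [fmon_eq]
  · rw [eq8 K hK', zero_mul]
    exact Submodule.smul_mem _ z (Submodule.zero_mem _)

lemma span_top (hKempty : (∅ : Finset (Fin m)) ∈ K)
    (hKdown : ∀ σ ∈ K, ∀ τ ⊆ σ, τ ∈ K) :
    ⊤ ≤ Submodule.span ℤ (Set.range (fmon K)) := by
  set Sp := Submodule.span ℤ (Set.range (fmon K)) with hSp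
  have main : ∀ x : FA m, ∀ y ∈ Sp, mkq K x * y ∈ Sp := by
    intro x
    induction x using FreeAlgebra.induction with
    | grade0 r =>
      intro y hy
      rw [AlgHom.commutes, ← Algebra.smul_def]
      exact Submodule.smul_mem _ r hy
    | grade1 x =>
      rcases x with i | i
      · intro y hy
        refine Submodule.span_induction
          (p := fun y _ => mkq K (FreeAlgebra.ι ℤ (Sum.inl i)) * y ∈ Sp)
          (fun g hg => ?_) (by simpa using Submodule.zero_mem Sp)
          (fun a b _ _ ha hb => by simpa [mul_add] using Submodule.add_mem Sp ha hb)
          (fun a x _ hx => by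
            show mkq K _ * (a • x) ∈ Sp
            rw [mul_smul_comm]; exact Submodule.smul_mem Sp a hx) hy
        obtain ⟨st, rfl⟩ := hg
        exact u_mul_mem K hKdown i st
      · intro y hy
        refine Submodule.span_induction
          (p := fun y _ => mkq K (FreeAlgebra.ι ℤ (Sum.inr i)) * y ∈ Sp)
          (fun g hg => ?_) (by simpa using Submodule.zero_mem Sp)
          (fun a b _ _ ha hb => by simpa [mul_add] using Submodule.add_mem Sp ha hb)
          (fun a x _ hx => by
            show mkq K _ * (a • x) ∈ Sp
            rw [mul_smul_comm]; exact Submodule.smul_mem Sp a hx) hy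
        obtain ⟨st, rfl⟩ := hg
        exact t_mul_mem K i st
    | mul a b ha hb =>
      intro y hy
      rw [map_mul, mul_assoc]
      exact ha _ (hb _ hy)
    | add a b ha hb =>
      intro y hy
      rw [map_add, add_mul]
      exact Submodule.add_mem _ (ha y hy) (hb y hy)
  intro y _
  obtain ⟨x, rfl⟩ := RingQuot.mkAlgHom_surjective ℤ (relK K) y
  have h := main x 1 (one_mem_span K hKempty)
  rwa [mul_one] at h

end SR

/-- The monomials `u_σ t_τ` with `σ ∈ K` and `σ ∩ τ = ∅` form a `ℤ`-basis of `R/𝓘_K`. -/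
theorem monomials_basis_of_RI {m : ℕ} (K : Finset (Finset (Fin m)))
    (hKempty : (∅ : Finset (Fin m)) ∈ K)
    (hKdown : ∀ σ ∈ K, ∀ τ ⊆ σ, τ ∈ K) :
    ∃ B : Module.Basis {st : Finset (Fin m) × Finset (Fin m) //
        st.1 ∈ K ∧ Disjoint st.1 st.2} ℤ (RI m K),
      ∀ st, B st = mono K st.1.1 st.1.2 := by
  classical
  let φ : RI m K →ₗ[ℤ] SR.Md m K :=
    (LinearMap.applyₗ (Finsupp.single (SR.base K hKempty) 1)).comp
      (SR.piQ K hKdown).toLinearMap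
  have hφ : ∀ st : SR.Idx m K, φ (SR.fmon K st) = Finsupp.single st 1 := by
    intro st
    show SR.piQ K hKdown (mono K st.1.1 st.1.2) (Finsupp.single (SR.base K hKempty) 1) = _
    rw [SR.piQ_mono K hKdown hKempty st.2.1 st.2.2]
  have hLI : LinearIndependent ℤ (SR.fmon K) := by
    refine LinearIndependent.of_comp φ ?_
    have hco : ⇑φ ∘ SR.fmon K = fun st => Finsupp.single st (1 : ℤ) := funext hφ
    rw [hco]
    have h := (Finsupp.basisSingleOne (R := ℤ) (ι := SR.Idx m K)).linearIndependent
    simpa [Finsupp.coe_basisSingleOne] using h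
  have hsp := SR.span_top K hKempty hKdown
  refine ⟨Module.Basis.mk hLI hsp, fun st => ?_⟩
  rw [Module.Basis.mk_apply]
  rfl
end

section
/- In R/𝓘_K, for σ, σ' ∈ K and τ, τ' ⊆ [m] with σ ∩ τ = ∅ and σ' ∩ τ' = ∅, the product of basis monomials is given by: (u_σ t_τ)·(u_{σ'} t_{τ'}) = 0 if σ ∩ σ' ≠ ∅, or τ ∩ σ' ≠ ∅, or σ ∪ σ' ∉ K; and otherwise (u_σ t_τ)·(u_{σ'} t_{τ'}) = (−1)^{ε(σ,σ')} u_{σ∪σ'} t_{(τ∪τ')∖(σ∪σ')}, where ε(σ,σ') = #{(j,i) ∈ σ × σ' : i < j}. -/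
/-- `ε(σ,σ') = #{(j,i) ∈ σ × σ' : i < j}`. -/
def epsSign {m : ℕ} (σ σ' : Finset (Fin m)) : ℕ :=
  ((σ ×ˢ σ').filter (fun ji => ji.2 < ji.1)).card

namespace MM
variable {m : ℕ} (K : Finset (Finset (Fin m)))

noncomputable def π : FA m →ₐ[ℤ] RI m K := RingQuot.mkAlgHom ℤ (relK K)
noncomputable def U (i : Fin m) : RI m K := π K (ugen i)
noncomputable def T (i : Fin m) : RI m K := π K (tgen i)

lemma gen_zero {x : FA m} (hx : x ∈ gens K) : π K x = 0 := by
  have h : relK K x 0 := ⟨hx, rfl⟩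
  have := RingQuot.mkAlgHom_rel ℤ h
  simpa [π] using this

variable {K}

lemma hUT (i : Fin m) : U K i * T K i = U K i := by
  have := gen_zero K (x := ugen i * tgen i - ugen i) (Or.inl ⟨i, rfl⟩)
  rw [map_sub, map_mul, sub_eq_zero] at this
  exact this

lemma hTU (i : Fin m) : T K i * U K i = 0 := by
  have := gen_zero K (x := tgen i * ugen i) (Or.inr (Or.inl ⟨i, rfl⟩))
  rw [map_mul] at this
  exact this

lemma hTT (i : Fin m) : T K i * T K i = T K i := by
  have := gen_zero K (x := tgen i * tgen i - tgen i) (Or.inr (Or.inr (Or.inl ⟨i, rfl⟩)))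
  rw [map_sub, map_mul, sub_eq_zero] at this
  exact this

lemma hUU (i : Fin m) : U K i * U K i = 0 := by
  have := gen_zero K (x := ugen i * ugen i) (Or.inr (Or.inr (Or.inr (Or.inl ⟨i, rfl⟩))))
  rw [map_mul] at this
  exact this

lemma hUTc {i j : Fin m} (h : i ≠ j) : U K i * T K j = T K j * U K i := by
  have := gen_zero K (x := ugen i * tgen j - tgen j * ugen i)
    (Or.inr (Or.inr (Or.inr (Or.inr (Or.inl ⟨i, j, h, rfl⟩)))))
  rw [map_sub, map_mul, map_mul, sub_eq_zero] at this
  exact this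

lemma hUUa {i j : Fin m} (h : i ≠ j) : U K i * U K j = -(U K j * U K i) := by
  have := gen_zero K (x := ugen i * ugen j + ugen j * ugen i)
    (Or.inr (Or.inr (Or.inr (Or.inr (Or.inr (Or.inl ⟨i, j, h, rfl⟩))))))
  rw [map_add, map_mul, map_mul] at this
  exact eq_neg_of_add_eq_zero_left this

lemma hTTc {i j : Fin m} (h : i ≠ j) : T K i * T K j = T K j * T K i := by
  have := gen_zero K (x := tgen i * tgen j - tgen j * tgen i)
    (Or.inr (Or.inr (Or.inr (Or.inr (Or.inr (Or.inr (Or.inl ⟨i, j, h, rfl⟩)))))))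
  rw [map_sub, map_mul, map_mul, sub_eq_zero] at this
  exact this

lemma hKzero {σ : Finset (Fin m)} (h : σ ∉ K) : π K (uprod σ) = 0 :=
  gen_zero K (Or.inr (Or.inr (Or.inr (Or.inr (Or.inr (Or.inr (Or.inr ⟨σ, h, rfl⟩)))))))


noncomputable def Ul (K : Finset (Finset (Fin m))) (l : List (Fin m)) : RI m K :=
  (l.map (U K)).prod
noncomputable def Tl (K : Finset (Finset (Fin m))) (l : List (Fin m)) : RI m K :=
  (l.map (T K)).prod

@[simp] lemma Ul_nil : Ul K ([] : List (Fin m)) = 1 := rfl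
@[simp] lemma Ul_cons (a : Fin m) (l : List (Fin m)) :
    Ul K (a :: l) = U K a * Ul K l := by simp [Ul]
@[simp] lemma Tl_nil : Tl K ([] : List (Fin m)) = 1 := rfl
@[simp] lemma Tl_cons (a : Fin m) (l : List (Fin m)) :
    Tl K (a :: l) = T K a * Tl K l := by simp [Tl]

/-- `T a` commutes with `Ul l` when `a ∉ l`. -/
lemma T_comm_Ul {a : Fin m} : ∀ {l : List (Fin m)}, a ∉ l →
    T K a * Ul K l = Ul K l * T K a
  | [], _ => by simp
  | b :: l, h => by
    have hab : a ≠ b := fun e => h (e ▸ List.mem_cons_self)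
    have hal : a ∉ l := fun e => h (List.mem_cons_of_mem b e)
    rw [Ul_cons, ← mul_assoc, ← hUTc hab.symm, mul_assoc, T_comm_Ul hal, ← mul_assoc]

/-- `T a` commutes with `Tl l` when `a ∉ l`. -/
lemma T_comm_Tl {a : Fin m} : ∀ {l : List (Fin m)}, a ∉ l →
    T K a * Tl K l = Tl K l * T K a
  | [], _ => by simp
  | b :: l, h => by
    have hab : a ≠ b := fun e => h (e ▸ List.mem_cons_self)
    have hal : a ∉ l := fun e => h (List.mem_cons_of_mem b e)
    rw [Tl_cons, ← mul_assoc, hTTc hab, mul_assoc, T_comm_Tl hal, ← mul_assoc]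

/-- `Tl l` commutes with `Ul l'` for disjoint lists. -/
lemma Tl_comm_Ul : ∀ {l l' : List (Fin m)}, (∀ c ∈ l, c ∉ l') →
    Tl K l * Ul K l' = Ul K l' * Tl K l
  | [], _, _ => by simp
  | b :: l, l', h => by
    rw [Tl_cons, mul_assoc, Tl_comm_Ul (fun c hc => h c (List.mem_cons_of_mem b hc)),
      ← mul_assoc, T_comm_Ul (h b (List.mem_cons_self)), mul_assoc]

/-- `T a * Ul l = 0` when `a ∈ l`. -/
lemma T_mul_Ul_zero {a : Fin m} : ∀ {l : List (Fin m)}, a ∈ l →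
    T K a * Ul K l = 0
  | b :: l, h => by
    rcases eq_or_ne a b with rfl | hab
    · rw [Ul_cons, ← mul_assoc, hTU, zero_mul]
    · have hal : a ∈ l := by
        rcases List.mem_cons.mp h with h' | h'
        · exact absurd h' hab
        · exact h'
      rw [Ul_cons, ← mul_assoc, ← hUTc hab.symm, mul_assoc, T_mul_Ul_zero hal, mul_zero]

/-- `Tl l * Ul l' = 0` when the lists share an element. -/
lemma Tl_mul_Ul_zero : ∀ {l l' : List (Fin m)}, (∃ a, a ∈ l ∧ a ∈ l') →
    Tl K l * Ul K l' = 0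
  | [], l', h => by rcases h with ⟨a, ha, _⟩; exact absurd ha (List.not_mem_nil)
  | b :: l, l', h => by
    by_cases hs : ∃ c, c ∈ l ∧ c ∈ l'
    · rw [Tl_cons, mul_assoc, Tl_mul_Ul_zero hs, mul_zero]
    · push_neg at hs
      rcases h with ⟨a, ha, ha'⟩
      have hab : a = b := by
        rcases List.mem_cons.mp ha with h' | h'
        · exact h'
        · exact absurd ha' (hs a h')
      subst hab
      rw [Tl_cons, mul_assoc, Tl_comm_Ul hs, ← mul_assoc, T_mul_Ul_zero ha', zero_mul]

/-- `Ul l * T a = T a * Ul l` when `a ∉ l`. -/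
lemma Ul_comm_T {a : Fin m} {l : List (Fin m)} (h : a ∉ l) :
    Ul K l * T K a = T K a * Ul K l := (T_comm_Ul h).symm

lemma neg_mul_RI (x y : RI m K) : -x * y = -(x * y) := neg_mul x y
lemma mul_neg_RI (x y : RI m K) : x * -y = -(x * y) := mul_neg x y
lemma smul_neg_RI (z : ℤ) (x : RI m K) : z • -x = -(z • x) := smul_neg z x
lemma neg_smul_RI (z : ℤ) (x : RI m K) : (-z) • x = -(z • x) := neg_smul z x
lemma smul_smul_RI (z w : ℤ) (x : RI m K) : z • w • x = (z * w) • x := smul_smul z w x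
lemma smul_mul_RI (z : ℤ) (x y : RI m K) : (z • x) * y = z • (x * y) := smul_mul_assoc z x y
lemma mul_smul_RI (z : ℤ) (x y : RI m K) : x * (z • y) = z • (x * y) := mul_smul_comm z x y
lemma smul_zero_RI (z : ℤ) : z • (0 : RI m K) = 0 := smul_zero z

/-- Moving `U a` from the right into a sorted list, with sign. -/
lemma Ul_mul_U {a : Fin m} : ∀ {l : List (Fin m)}, l.Pairwise (· ≤ ·) → a ∉ l →
    Ul K l * U K a =
      ((-1 : ℤ) ^ (l.countP (fun x => a < x))) • Ul K (l.orderedInsert (· ≤ ·) a)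
  | [], _, _ => by simp [List.orderedInsert]
  | x :: s, hs, ha => by
    have hax : a ≠ x := fun e => ha (e ▸ List.mem_cons_self)
    have has : a ∉ s := fun e => ha (List.mem_cons_of_mem x e)
    have hss : s.Pairwise (· ≤ ·) := hs.of_cons
    by_cases hle : a ≤ x
    · have hax' : a < x := lt_of_le_of_ne hle hax
      have hall : ∀ y ∈ s, a < y := fun y hy => lt_of_lt_of_le hax' (List.rel_of_pairwise_cons hs hy)
      have hins : s.orderedInsert (· ≤ ·) a = a :: s := by
        cases s with
        | nil => rfl
        | cons b t =>
          have : a ≤ b := (hall b (List.mem_cons_self)).le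
          simp [List.orderedInsert, this]
      have hcount : s.countP (fun x => a < x) = s.length := by
        rw [List.countP_eq_length]
        intro y hy
        simpa using hall y hy
      rw [Ul_cons, mul_assoc, Ul_mul_U hss has, hins, List.orderedInsert, if_pos hle]
      rw [mul_smul_comm, Ul_cons, Ul_cons, Ul_cons, ← mul_assoc, hUUa hax.symm,
        List.countP_cons, hcount]
      have : decide (a < x) = true := by simpa using hax'
      rw [this, if_pos rfl, pow_succ, mul_neg_one, neg_smul_RI, neg_mul_RI, mul_assoc, smul_neg_RI]
    · have hxa : x < a := lt_of_le_of_ne (le_of_not_ge hle) (Ne.symm hax)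
      rw [Ul_cons, mul_assoc, Ul_mul_U hss has, List.orderedInsert, if_neg hle,
        Ul_cons, mul_smul_comm, List.countP_cons]
      have : decide (a < x) = false := by simpa using not_lt_of_ge hxa.le
      rw [this]
      simp

/-- `Ul l * U a = 0` when `a ∈ l` (sorted, nodup). -/
lemma Ul_mul_U_zero {a : Fin m} : ∀ {l : List (Fin m)}, l.Pairwise (· ≤ ·) → l.Nodup →
    a ∈ l → Ul K l * U K a = 0
  | x :: s, hs, hnd, ha => by
    have hss : s.Pairwise (· ≤ ·) := hs.of_cons
    rcases eq_or_ne a x with rfl | hax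
    · have has : a ∉ s := (List.nodup_cons.mp hnd).1
      have hins : s.orderedInsert (· ≤ ·) a = a :: s := by
        cases s with
        | nil => rfl
        | cons b t =>
          have : a ≤ b := List.rel_of_pairwise_cons hs (List.mem_cons_self)
          simp [List.orderedInsert, this]
      rw [Ul_cons, mul_assoc, Ul_mul_U hss has, hins, mul_smul_comm, Ul_cons,
        ← mul_assoc, hUU, zero_mul, smul_zero_RI]
    · have has : a ∈ s := by
        rcases List.mem_cons.mp ha with h' | h'
        · exact absurd h' hax
        · exact h'
      rw [Ul_cons, mul_assoc, Ul_mul_U_zero hss (List.nodup_cons.mp hnd).2 has, mul_zero]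

/-- Number of "inversions" between `l` and `l'`. -/
def epsL (l l' : List (Fin m)) : ℕ := (l'.map (fun i => l.countP (fun j => i < j))).sum

@[simp] lemma epsL_nil (l : List (Fin m)) : epsL l [] = 0 := rfl

lemma epsL_cons (l : List (Fin m)) (a : Fin m) (s : List (Fin m)) :
    epsL l (a :: s) = l.countP (fun j => a < j) + epsL l s := by simp [epsL]

lemma epsL_perm {l l₂ : List (Fin m)} (h : l.Perm l₂) (s : List (Fin m)) :
    epsL l s = epsL l₂ s := by
  unfold epsL
  congr 1
  exact List.map_congr_left fun i _ => h.countP_eq _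

lemma epsL_cons_left {a : Fin m} {s : List (Fin m)} (h : ∀ i ∈ s, ¬ i < a)
    (l : List (Fin m)) : epsL (a :: l) s = epsL l s := by
  unfold epsL
  congr 1
  refine List.map_congr_left fun i hi => ?_
  rw [List.countP_cons]
  have : decide (i < a) = false := by simpa using h i hi
  simp [this]

/-- Merging two sorted products of `U`'s, with sign. -/
lemma Ul_mul_Ul (l' : List (Fin m)) : ∀ l : List (Fin m),
    l.Pairwise (· ≤ ·) → l.Nodup → l'.Pairwise (· ≤ ·) → l'.Nodup → (∀ a ∈ l, a ∉ l') →
    ∃ L : List (Fin m), L.Pairwise (· ≤ ·) ∧ L.Perm (l ++ l') ∧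
      Ul K l * Ul K l' = ((-1 : ℤ) ^ epsL l l') • Ul K L := by
  induction l' with
  | nil => intro l hs _ _ _ _; exact ⟨l, hs, by simp, by simp⟩
  | cons a s ih =>
    intro l hs hnd hs' hnd' hdisj
    have ha : a ∉ l := fun h => hdisj a h (List.mem_cons_self)
    have hperm1 : (l.orderedInsert (· ≤ ·) a).Perm (a :: l) :=
      List.perm_orderedInsert _ a l
    have hl₁s : (l.orderedInsert (· ≤ ·) a).Pairwise (· ≤ ·) := hs.orderedInsert a l
    have hl₁nd : (l.orderedInsert (· ≤ ·) a).Nodup :=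
      hperm1.nodup_iff.mpr (List.nodup_cons.mpr ⟨ha, hnd⟩)
    have hdisj₁ : ∀ b ∈ l.orderedInsert (· ≤ ·) a, b ∉ s := by
      intro b hb
      rcases List.mem_cons.mp (hperm1.mem_iff.mp hb) with rfl | hbl
      · exact (List.nodup_cons.mp hnd').1
      · exact fun hbs => hdisj b hbl (List.mem_cons_of_mem a hbs)
    obtain ⟨L, hLs, hLp, hLe⟩ := ih (l.orderedInsert (· ≤ ·) a) hl₁s hl₁nd hs'.of_cons
      (List.nodup_cons.mp hnd').2 hdisj₁
    refine ⟨L, hLs, ?_, ?_⟩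
    · exact hLp.trans ((hperm1.append_right s).trans List.perm_middle.symm)
    · have hsnota : ∀ i ∈ s, ¬ i < a := fun i hi =>
        not_lt_of_ge (List.rel_of_pairwise_cons hs' hi)
      have heps : epsL (l.orderedInsert (· ≤ ·) a) s = epsL l s := by
        rw [epsL_perm hperm1 s, epsL_cons_left hsnota]
      rw [Ul_cons, ← mul_assoc, Ul_mul_U hs ha, smul_mul_RI, hLe, smul_smul_RI, ← pow_add,
        heps, epsL_cons]

/-- Two sorted nodup products of `U`'s sharing an element multiply to zero. -/
lemma Ul_mul_Ul_zero (l' : List (Fin m)) : ∀ l : List (Fin m),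
    l.Pairwise (· ≤ ·) → l.Nodup → l'.Pairwise (· ≤ ·) → l'.Nodup →
    (∃ a, a ∈ l ∧ a ∈ l') → Ul K l * Ul K l' = 0 := by
  induction l' with
  | nil => intro l _ _ _ _ h; rcases h with ⟨a, _, ha⟩; exact absurd ha (List.not_mem_nil)
  | cons a s ih =>
    intro l hs hnd hs' hnd' h
    rcases h with ⟨b, hbl, hbl'⟩
    by_cases hal : a ∈ l
    · rw [Ul_cons, ← mul_assoc, Ul_mul_U_zero hs hnd hal, zero_mul]
    · have hperm1 : (l.orderedInsert (· ≤ ·) a).Perm (a :: l) :=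
        List.perm_orderedInsert _ a l
      have hl₁s : (l.orderedInsert (· ≤ ·) a).Pairwise (· ≤ ·) := hs.orderedInsert a l
      have hl₁nd : (l.orderedInsert (· ≤ ·) a).Nodup :=
        hperm1.nodup_iff.mpr (List.nodup_cons.mpr ⟨hal, hnd⟩)
      have hba : b ≠ a := fun e => hal (e ▸ hbl)
      have hbs : b ∈ s := by
        rcases List.mem_cons.mp hbl' with h' | h'
        · exact absurd h' hba
        · exact h'
      have : Ul K (l.orderedInsert (· ≤ ·) a) * Ul K s = 0 :=
        ih _ hl₁s hl₁nd hs'.of_cons (List.nodup_cons.mp hnd').2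
          ⟨b, hperm1.mem_iff.mpr (List.mem_cons_of_mem a hbl), hbs⟩
      rw [Ul_cons, ← mul_assoc, Ul_mul_U hs hal, smul_mul_RI, this, smul_zero_RI]

/-- Inserting a new `T` into a sorted product. -/
lemma Tl_mul_T_notmem {a : Fin m} : ∀ {l : List (Fin m)}, l.Pairwise (· ≤ ·) → a ∉ l →
    Tl K l * T K a = Tl K (l.orderedInsert (· ≤ ·) a)
  | [], _, _ => by simp [List.orderedInsert]
  | x :: s, hs, ha => by
    have hax : a ≠ x := fun e => ha (e ▸ List.mem_cons_self)
    have has : a ∉ s := fun e => ha (List.mem_cons_of_mem x e)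
    by_cases hle : a ≤ x
    · rw [List.orderedInsert, if_pos hle, ← T_comm_Tl ha, ← Tl_cons]
    · rw [List.orderedInsert, if_neg hle, Tl_cons, Tl_cons, mul_assoc,
        Tl_mul_T_notmem hs.of_cons has]

/-- A repeated `T` is absorbed. -/
lemma Tl_mul_T_mem {a : Fin m} : ∀ {l : List (Fin m)}, l.Nodup → a ∈ l →
    Tl K l * T K a = Tl K l
  | x :: s, hnd, ha => by
    rcases eq_or_ne a x with rfl | hax
    · have has : a ∉ s := (List.nodup_cons.mp hnd).1
      rw [Tl_cons, mul_assoc, ← T_comm_Tl has, ← mul_assoc, hTT]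
    · have has : a ∈ s := by
        rcases List.mem_cons.mp ha with h' | h'
        · exact absurd h' hax
        · exact h'
      rw [Tl_cons, mul_assoc, Tl_mul_T_mem (List.nodup_cons.mp hnd).2 has]

/-- Merging two products of `T`'s. -/
lemma Tl_mul_Tl (l' : List (Fin m)) : ∀ l : List (Fin m),
    l.Pairwise (· ≤ ·) → l.Nodup →
    ∃ L : List (Fin m), L.Pairwise (· ≤ ·) ∧ L.Nodup ∧
      (∀ x, x ∈ L ↔ x ∈ l ∨ x ∈ l') ∧ Tl K l * Tl K l' = Tl K L := by
  induction l' with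
  | nil => intro l hs hnd; exact ⟨l, hs, hnd, by simp, by simp⟩
  | cons a s ih =>
    intro l hs hnd
    by_cases hal : a ∈ l
    · obtain ⟨L, h1, h2, h3, h4⟩ := ih l hs hnd
      refine ⟨L, h1, h2, fun x => ?_, ?_⟩
      · rw [h3, List.mem_cons]
        constructor
        · rintro (h | h)
          · exact Or.inl h
          · exact Or.inr (Or.inr h)
        · rintro (h | rfl | h)
          · exact Or.inl h
          · exact Or.inl hal
          · exact Or.inr h
      · rw [Tl_cons, ← mul_assoc, Tl_mul_T_mem hnd hal, h4]
    · have hperm1 : (l.orderedInsert (· ≤ ·) a).Perm (a :: l) :=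
        List.perm_orderedInsert _ a l
      obtain ⟨L, h1, h2, h3, h4⟩ := ih (l.orderedInsert (· ≤ ·) a) (hs.orderedInsert a l)
        (hperm1.nodup_iff.mpr (List.nodup_cons.mpr ⟨hal, hnd⟩))
      refine ⟨L, h1, h2, fun x => ?_, ?_⟩
      · rw [h3, hperm1.mem_iff, List.mem_cons, List.mem_cons]
        tauto
      · rw [Tl_cons, ← mul_assoc, Tl_mul_T_notmem hs hal, h4]

/-- A `T` with index occurring among the `U`'s is absorbed. -/
lemma Ul_mul_T_mem {a : Fin m} : ∀ {l : List (Fin m)}, l.Nodup → a ∈ l →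
    Ul K l * T K a = Ul K l
  | x :: s, hnd, ha => by
    rcases eq_or_ne a x with rfl | hax
    · have has : a ∉ s := (List.nodup_cons.mp hnd).1
      rw [Ul_cons, mul_assoc, Ul_comm_T has, ← mul_assoc, hUT]
    · have has : a ∈ s := by
        rcases List.mem_cons.mp ha with h' | h'
        · exact absurd h' hax
        · exact h'
      rw [Ul_cons, mul_assoc, Ul_mul_T_mem (List.nodup_cons.mp hnd).2 has]

/-- `T`'s whose index occurs among the `U`'s are absorbed. -/
lemma Ul_mul_Tl_filter (ν : List (Fin m)) : ∀ l : List (Fin m), l.Nodup →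
    Ul K l * Tl K ν = Ul K l * Tl K (ν.filter (fun x => x ∉ l)) := by
  induction ν with
  | nil => intro l _; simp
  | cons a s ih =>
    intro l hnd
    by_cases hal : a ∈ l
    · have : (List.filter (fun x => decide (x ∉ l)) (a :: s)) =
          List.filter (fun x => decide (x ∉ l)) s := by
        rw [List.filter_cons]
        simp [hal]
      rw [this, Tl_cons, ← mul_assoc, Ul_mul_T_mem hnd hal, ih l hnd]
    · have : (List.filter (fun x => decide (x ∉ l)) (a :: s)) =
          a :: List.filter (fun x => decide (x ∉ l)) s := by
        rw [List.filter_cons]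
        simp [hal]
      rw [this, Tl_cons, Tl_cons, ← mul_assoc, Ul_comm_T hal, mul_assoc, ih l hnd,
        ← mul_assoc, ← Ul_comm_T hal, mul_assoc]

/-- A sorted, nodup list with the same members as `ρ` is `ρ.sort`. -/
lemma eq_sort_of {L : List (Fin m)} {ρ : Finset (Fin m)} (hs : L.Pairwise (· ≤ ·))
    (hn : L.Nodup) (hm : ∀ x, x ∈ L ↔ x ∈ ρ) : L = ρ.sort (· ≤ ·) := by
  have h1 : L.toFinset = ρ := Finset.ext (by simp [hm])
  have h2 : (L : Multiset (Fin m)) = ρ.val := by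
    rw [← h1]
    simp [List.toFinset, Multiset.toFinset, Multiset.coe_eq_coe,
      List.dedup_eq_self.mpr hn]
  have hp : L.Perm (ρ.sort (· ≤ ·)) := by
    rw [← Multiset.coe_eq_coe, h2, Finset.sort_eq]
  exact hp.eq_of_pairwise' hs (Finset.pairwise_sort _ _)

lemma epsL_sort (σ σ' : Finset (Fin m)) :
    epsL (σ.sort (· ≤ ·)) (σ'.sort (· ≤ ·)) = epsSign σ σ' := by
  have hf : ∀ i : Fin m, (σ.sort (· ≤ ·)).countP (fun j => decide (i < j)) =
      (σ.filter (fun j => i < j)).card := by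
    intro i
    rw [← Multiset.coe_countP, Finset.sort_eq, Finset.card_def, Finset.filter_val,
      ← Multiset.countP_eq_card_filter]
  have hsum : ∀ f : Fin m → ℕ, ((σ'.sort (· ≤ ·)).map f).sum = ∑ i ∈ σ', f i := by
    intro f
    rw [← Multiset.sum_coe, ← Multiset.map_coe, Finset.sort_eq]
    rfl
  unfold epsL epsSign
  rw [hsum, Finset.card_filter, Finset.sum_product, Finset.sum_comm]
  refine Finset.sum_congr rfl fun i _ => ?_
  rw [hf i, Finset.card_filter]

lemma Ul_sort (ρ : Finset (Fin m)) : Ul K (ρ.sort (· ≤ ·)) = π K (uprod ρ) := by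
  unfold Ul uprod U
  rw [map_list_prod, List.map_map]
  rfl

lemma Tl_sort (ρ : Finset (Fin m)) : Tl K (ρ.sort (· ≤ ·)) = π K (tprodGen ρ) := by
  unfold Tl tprodGen T
  rw [map_list_prod, List.map_map]
  rfl

lemma mono_eq (σ τ : Finset (Fin m)) :
    mono K σ τ = Ul K (σ.sort (· ≤ ·)) * Tl K (τ.sort (· ≤ ·)) := by
  rw [Ul_sort, Tl_sort]
  exact map_mul (π K) (uprod σ) (tprodGen τ)

end MM

open MM in
theorem mono_mul_mono' {m : ℕ} (K : Finset (Finset (Fin m)))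
    (hKempty : (∅ : Finset (Fin m)) ∈ K)
    (hKdown : ∀ σ ∈ K, ∀ τ ⊆ σ, τ ∈ K)
    (σ τ σ' τ' : Finset (Fin m))
    (hσ : σ ∈ K) (hσ' : σ' ∈ K)
    (hστ : Disjoint σ τ) (hστ' : Disjoint σ' τ') :
    ((σ ∩ σ' ≠ ∅ ∨ τ ∩ σ' ≠ ∅ ∨ σ ∪ σ' ∉ K) →
      mono K σ τ * mono K σ' τ' = 0) ∧
    (σ ∩ σ' = ∅ → τ ∩ σ' = ∅ → σ ∪ σ' ∈ K →
      mono K σ τ * mono K σ' τ' =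
        ((-1 : ℤ) ^ epsSign σ σ') • mono K (σ ∪ σ') ((τ ∪ τ') \ (σ ∪ σ'))) := by
  classical
  have hstart : mono K σ τ * mono K σ' τ' =
      Ul K (σ.sort (· ≤ ·)) * (Tl K (τ.sort (· ≤ ·)) * Ul K (σ'.sort (· ≤ ·))) *
        Tl K (τ'.sort (· ≤ ·)) := by
    rw [mono_eq, mono_eq, mul_assoc, mul_assoc, mul_assoc]
  -- the case τ ∩ σ' ≠ ∅ :
  have hzero_ts : τ ∩ σ' ≠ ∅ → mono K σ τ * mono K σ' τ' = 0 := by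
    intro h
    obtain ⟨a, ha⟩ := Finset.nonempty_iff_ne_empty.mpr h
    have ha1 : a ∈ τ.sort (· ≤ ·) := Finset.mem_sort _ |>.mpr (Finset.mem_inter.mp ha).1
    have ha2 : a ∈ σ'.sort (· ≤ ·) := Finset.mem_sort _ |>.mpr (Finset.mem_inter.mp ha).2
    rw [hstart, Tl_mul_Ul_zero ⟨a, ha1, ha2⟩, mul_zero, zero_mul]
  -- swap in the case τ ∩ σ' = ∅ :
  have hswap : τ ∩ σ' = ∅ →
      mono K σ τ * mono K σ' τ' =
        (Ul K (σ.sort (· ≤ ·)) * Ul K (σ'.sort (· ≤ ·))) *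
          (Tl K (τ.sort (· ≤ ·)) * Tl K (τ'.sort (· ≤ ·))) := by
    intro h
    have hdisj : ∀ c ∈ τ.sort (· ≤ ·), c ∉ σ'.sort (· ≤ ·) := by
      intro c hc hc'
      have : c ∈ τ ∩ σ' := Finset.mem_inter.mpr
        ⟨(Finset.mem_sort _).mp hc, (Finset.mem_sort _).mp hc'⟩
      simp [h] at this
    rw [hstart, Tl_comm_Ul hdisj, ← mul_assoc, ← mul_assoc, mul_assoc
      (Ul K (σ.sort (· ≤ ·)) * Ul K (σ'.sort (· ≤ ·)))]
  constructor
  · rintro (h | h | h)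
    · -- σ ∩ σ' ≠ ∅
      by_cases hts : τ ∩ σ' = ∅
      · obtain ⟨a, ha⟩ := Finset.nonempty_iff_ne_empty.mpr h
        have ha1 : a ∈ σ.sort (· ≤ ·) := Finset.mem_sort _ |>.mpr (Finset.mem_inter.mp ha).1
        have ha2 : a ∈ σ'.sort (· ≤ ·) := Finset.mem_sort _ |>.mpr (Finset.mem_inter.mp ha).2
        rw [hswap hts, Ul_mul_Ul_zero _ _ (Finset.pairwise_sort _ _) (Finset.sort_nodup _ _)
          (Finset.pairwise_sort _ _) (Finset.sort_nodup _ _) ⟨a, ha1, ha2⟩, zero_mul]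
      · exact hzero_ts hts
    · exact hzero_ts h
    · -- σ ∪ σ' ∉ K
      by_cases hts : τ ∩ σ' = ∅
      · by_cases hss : σ ∩ σ' = ∅
        · have hdisj : ∀ a ∈ σ.sort (· ≤ ·), a ∉ σ'.sort (· ≤ ·) := by
            intro c hc hc'
            have : c ∈ σ ∩ σ' := Finset.mem_inter.mpr
              ⟨(Finset.mem_sort _).mp hc, (Finset.mem_sort _).mp hc'⟩
            simp [hss] at this
          obtain ⟨L, hLs, hLp, hLe⟩ := Ul_mul_Ul (K := K) (σ'.sort (· ≤ ·)) (σ.sort (· ≤ ·))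
            (Finset.pairwise_sort _ _) (Finset.sort_nodup _ _)
            (Finset.pairwise_sort _ _) (Finset.sort_nodup _ _) hdisj
          have hLnd : L.Nodup := hLp.nodup_iff.mpr (List.nodup_append.mpr
            ⟨Finset.sort_nodup _ _, Finset.sort_nodup _ _, fun a ha b hb e => hdisj a ha (e ▸ hb)⟩)
          have hLm : ∀ x, x ∈ L ↔ x ∈ σ ∪ σ' := by
            intro x
            rw [hLp.mem_iff, List.mem_append, Finset.mem_union, Finset.mem_sort,
              Finset.mem_sort]
          have hLeq : L = (σ ∪ σ').sort (· ≤ ·) := eq_sort_of hLs hLnd hLm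
          have : Ul K L = 0 := by rw [hLeq, Ul_sort, hKzero h]
          rw [hswap hts, hLe, this, smul_zero_RI, zero_mul]
        · obtain ⟨a, ha⟩ := Finset.nonempty_iff_ne_empty.mpr hss
          have ha1 : a ∈ σ.sort (· ≤ ·) := Finset.mem_sort _ |>.mpr (Finset.mem_inter.mp ha).1
          have ha2 : a ∈ σ'.sort (· ≤ ·) := Finset.mem_sort _ |>.mpr (Finset.mem_inter.mp ha).2
          rw [hswap hts, Ul_mul_Ul_zero _ _ (Finset.pairwise_sort _ _) (Finset.sort_nodup _ _)
            (Finset.pairwise_sort _ _) (Finset.sort_nodup _ _) ⟨a, ha1, ha2⟩, zero_mul]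
      · exact hzero_ts hts
  · intro hss hts hK
    have hdisj : ∀ a ∈ σ.sort (· ≤ ·), a ∉ σ'.sort (· ≤ ·) := by
      intro c hc hc'
      have : c ∈ σ ∩ σ' := Finset.mem_inter.mpr
        ⟨(Finset.mem_sort _).mp hc, (Finset.mem_sort _).mp hc'⟩
      simp [hss] at this
    obtain ⟨L, hLs, hLp, hLe⟩ := Ul_mul_Ul (K := K) (σ'.sort (· ≤ ·)) (σ.sort (· ≤ ·))
      (Finset.pairwise_sort _ _) (Finset.sort_nodup _ _)
      (Finset.pairwise_sort _ _) (Finset.sort_nodup _ _) hdisj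
    have hLnd : L.Nodup := hLp.nodup_iff.mpr (List.nodup_append.mpr
      ⟨Finset.sort_nodup _ _, Finset.sort_nodup _ _, fun a ha b hb e => hdisj a ha (e ▸ hb)⟩)
    have hLm : ∀ x, x ∈ L ↔ x ∈ σ ∪ σ' := by
      intro x
      rw [hLp.mem_iff, List.mem_append, Finset.mem_union, Finset.mem_sort, Finset.mem_sort]
    have hLeq : L = (σ ∪ σ').sort (· ≤ ·) := eq_sort_of hLs hLnd hLm
    obtain ⟨M, hMs, hMnd, hMm, hMe⟩ := Tl_mul_Tl (K := K) (τ'.sort (· ≤ ·)) (τ.sort (· ≤ ·))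
      (Finset.pairwise_sort _ _) (Finset.sort_nodup _ _)
    have hMeq : M = (τ ∪ τ').sort (· ≤ ·) := by
      refine eq_sort_of hMs hMnd fun x => ?_
      rw [hMm x, Finset.mem_union, Finset.mem_sort, Finset.mem_sort]
    have hfilter : M.filter (fun x => x ∉ L) =
        ((τ ∪ τ') \ (σ ∪ σ')).sort (· ≤ ·) := by
      refine eq_sort_of (hMs.filter _) (hMnd.filter _) fun x => ?_
      simp only [List.mem_filter, decide_eq_true_eq, Finset.mem_sdiff, hMm x, hLm x,
        Finset.mem_sort, Finset.mem_union]
    rw [hswap hts, hLe, hMe, smul_mul_RI, Ul_mul_Tl_filter M L hLnd, hfilter, hLeq,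
      epsL_sort, ← mono_eq]


/-- The multiplication rule for basis monomials of `R/𝓘_K`. -/
theorem mono_mul_mono {m : ℕ} (K : Finset (Finset (Fin m)))
    (hKempty : (∅ : Finset (Fin m)) ∈ K)
    (hKdown : ∀ σ ∈ K, ∀ τ ⊆ σ, τ ∈ K)
    (σ τ σ' τ' : Finset (Fin m))
    (hσ : σ ∈ K) (hσ' : σ' ∈ K)
    (hστ : Disjoint σ τ) (hστ' : Disjoint σ' τ') :
    ((σ ∩ σ' ≠ ∅ ∨ τ ∩ σ' ≠ ∅ ∨ σ ∪ σ' ∉ K) →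
      mono K σ τ * mono K σ' τ' = 0) ∧
    (σ ∩ σ' = ∅ → τ ∩ σ' = ∅ → σ ∪ σ' ∈ K →
      mono K σ τ * mono K σ' τ' =
        ((-1 : ℤ) ^ epsSign σ σ') • mono K (σ ∪ σ') ((τ ∪ τ') \ (σ ∪ σ'))) :=
  mono_mul_mono' K hKempty hKdown σ τ σ' τ' hσ hσ' hστ hστ'
end

section
/- For every ω ⊆ [m], the ℤ-linear map λ_ω sending the basis element (σ, ω∖σ) of T(K)|_ω^p to the basis element σ* of C̃^{p−1}(K_ω) is an isomorphism of cochain complexes (of degree −1), i.e. it is bijective in each degree and commutes with the differentials; consequently it induces isomorphisms H^p(T(K)|_ω) ≅ H̃^{p−1}(K_ω) for all p. -/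
/-!
STATEMENT 6: For every `ω ⊆ [m]`, the map `λ_ω` sending the basis element `(σ, ω∖σ)`
of `T(K)|_ω^p` to the basis element `σ*` of the reduced simplicial cochain group
`C̃^{p−1}(K_ω)` of the full subcomplex `K_ω = {σ ∩ ω : σ ∈ K}` is an isomorphism of
cochain complexes (of degree `−1`): it is bijective in each degree and commutes with
the differentials; consequently `H^p(T(K)|_ω) ≅ H̃^{p−1}(K_ω)` for all `p`.

Indexing convention: the piece of index `p` of the reduced cochain complex `Ct K ω`
below has basis the simplices of `K_ω` of cardinality `p`, i.e. it is `C̃^{p−1}(K_ω)`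
(the empty simplex, of cardinality `0`, sits in reduced degree `−1`).
-/

/-- Basis of `T(K)|_ω^p`: pairs `(σ,τ)`, `σ ∈ K`, `σ,τ` disjoint, `σ ∪ τ = ω`, `|σ| = p`. -/
def TωB {m : ℕ} (K : Finset (Finset (Fin m))) (ω : Finset (Fin m)) (p : ℕ) : Type :=
  {x : Finset (Fin m) × Finset (Fin m) //
    x.1 ∈ K ∧ Disjoint x.1 x.2 ∧ x.1 ∪ x.2 = ω ∧ x.1.card = p}

noncomputable def dTωaux {m : ℕ} (K : Finset (Finset (Fin m))) (ω : Finset (Fin m)) (p : ℕ)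
    (b : TωB K ω p) : (TωB K ω (p + 1) →₀ ℤ) :=
  ∑ i ∈ b.1.2.attach,
    if h : insert i.1 b.1.1 ∈ K then
      Finsupp.single
        ⟨(insert i.1 b.1.1, b.1.2.erase i.1),
          h,
          Finset.disjoint_insert_left.mpr
            ⟨Finset.notMem_erase _ _, b.2.2.1.mono_right (Finset.erase_subset _ _)⟩,
          by rw [Finset.insert_union, ← Finset.union_insert, Finset.insert_erase i.2,
                 b.2.2.2.1],
          by
            rw [Finset.card_insert_of_notMem (Finset.disjoint_right.mp b.2.2.1 i.2),
              b.2.2.2.2]⟩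
        ((-1 : ℤ) ^ (b.1.1.filter (fun j => j < i.1)).card)
    else 0

/-- The differential of the subcomplex `T(K)|_ω`. -/
noncomputable def dTω {m : ℕ} (K : Finset (Finset (Fin m))) (ω : Finset (Fin m)) (p : ℕ) :
    (TωB K ω p →₀ ℤ) →ₗ[ℤ] (TωB K ω (p + 1) →₀ ℤ) :=
  Finsupp.lift _ ℤ _ (dTωaux K ω p)

/-- Basis of `C̃^{p−1}(K_ω)`: the simplices of `K_ω = {s ∩ ω : s ∈ K}` of cardinality `p`. -/
def CtB {m : ℕ} (K : Finset (Finset (Fin m))) (ω : Finset (Fin m)) (p : ℕ) : Type :=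
  {σ : Finset (Fin m) // (∃ s ∈ K, s ∩ ω = σ) ∧ σ.card = p}

open Classical in
/-- The reduced simplicial coboundary on a basis element `σ*`:
`δ(σ*) = Σ_{i ∈ ω∖σ, σ∪{i} ∈ K_ω} (−1)^{#{j ∈ σ : j < i}} (σ∪{i})*`. -/
noncomputable def dCtaux {m : ℕ} (K : Finset (Finset (Fin m))) (ω : Finset (Fin m)) (p : ℕ)
    (b : CtB K ω p) : (CtB K ω (p + 1) →₀ ℤ) :=
  ∑ i ∈ (ω \ b.1).attach,
    if h : ∃ s ∈ K, s ∩ ω = insert i.1 b.1 then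
      Finsupp.single
        ⟨insert i.1 b.1, h,
          by
            rw [Finset.card_insert_of_notMem (Finset.mem_sdiff.mp i.2).2, b.2.2]⟩
        ((-1 : ℤ) ^ (b.1.filter (fun j => j < i.1)).card)
    else 0

/-- The reduced simplicial coboundary `δ : C̃^{p−1}(K_ω) → C̃^{p}(K_ω)`. -/
noncomputable def dCt {m : ℕ} (K : Finset (Finset (Fin m))) (ω : Finset (Fin m)) (p : ℕ) :
    (CtB K ω p →₀ ℤ) →ₗ[ℤ] (CtB K ω (p + 1) →₀ ℤ) :=
  Finsupp.lift _ ℤ _ (dCtaux K ω p)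

/-- `λ_ω : T(K)|_ω^p → C̃^{p−1}(K_ω)`, `(σ, ω∖σ) ↦ σ*`. -/
noncomputable def lamOm {m : ℕ} (K : Finset (Finset (Fin m))) (ω : Finset (Fin m)) (p : ℕ) :
    (TωB K ω p →₀ ℤ) →ₗ[ℤ] (CtB K ω p →₀ ℤ) :=
  Finsupp.lift _ ℤ _ (fun b =>
    Finsupp.single
      ⟨b.1.1,
        ⟨b.1.1, b.2.1,
          Finset.inter_eq_left.mpr (Finset.Subset.trans Finset.subset_union_left (le_of_eq b.2.2.2.1))⟩,
        b.2.2.2.2⟩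
      (1 : ℤ))

def prevRange {M : ℕ → Type} [∀ p, AddCommGroup (M p)] [∀ p, Module ℤ (M p)]
    (d : ∀ p, M p →ₗ[ℤ] M (p + 1)) : ∀ p : ℕ, AddSubgroup (M p)
  | 0 => ⊥
  | p + 1 => AddMonoidHom.range (d p).toAddMonoidHom

abbrev Hgrp {M : ℕ → Type} [∀ p, AddCommGroup (M p)] [∀ p, Module ℤ (M p)]
    (d : ∀ p, M p →ₗ[ℤ] M (p + 1)) (p : ℕ) : Type :=
  (d p).toAddMonoidHom.ker ⧸ (prevRange d p).addSubgroupOf (d p).toAddMonoidHom.ker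


/-! ### Auxiliary material for the proof -/

section Aux

variable {m : ℕ} (K : Finset (Finset (Fin m))) (ω : Finset (Fin m))

/-- The basis bijection `(σ, ω∖σ) ↦ σ`. -/
noncomputable def eBasis (hKdown : ∀ σ ∈ K, ∀ τ ⊆ σ, τ ∈ K) (p : ℕ) :
    TωB K ω p ≃ CtB K ω p where
  toFun b :=
    ⟨b.1.1,
      ⟨b.1.1, b.2.1,
        Finset.inter_eq_left.mpr
          (Finset.Subset.trans Finset.subset_union_left (le_of_eq b.2.2.2.1))⟩,
      b.2.2.2.2⟩
  invFun c :=
    ⟨(c.1, ω \ c.1),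
      by
        obtain ⟨s, hs, hsc⟩ := c.2.1
        exact hKdown s hs c.1 (hsc ▸ Finset.inter_subset_left),
      Finset.disjoint_sdiff,
      by
        obtain ⟨s, hs, hsc⟩ := c.2.1
        exact Finset.union_sdiff_of_subset (hsc ▸ Finset.inter_subset_right),
      c.2.2⟩
  left_inv b := by
    obtain ⟨⟨σ, τ⟩, hσK, hdis, huni, hcard⟩ := b
    apply Subtype.ext
    have : ω \ σ = τ := by
      rw [← huni, Finset.union_sdiff_cancel_left hdis]
    show (σ, ω \ σ) = (σ, τ)
    rw [this]
  right_inv c := Subtype.ext rfl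

lemma lamOm_eq (hKdown : ∀ σ ∈ K, ∀ τ ⊆ σ, τ ∈ K) (p : ℕ) :
    lamOm K ω p = (Finsupp.domLCongr (R := ℤ) (M := ℤ) (eBasis K ω hKdown p)).toLinearMap := by
  apply Finsupp.lhom_ext
  intro b c
  simp only [lamOm, Finsupp.lift_apply, Finsupp.domLCongr_apply, LinearEquiv.coe_coe,
    Finsupp.domCongr_apply, Finsupp.equivMapDomain_single]
  rw [Finsupp.sum_single_index (by simp)]
  erw [Finsupp.smul_single, smul_eq_mul, mul_one]
  rfl

lemma lamOm_bijective (hKdown : ∀ σ ∈ K, ∀ τ ⊆ σ, τ ∈ K) (p : ℕ) :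
    Function.Bijective (lamOm K ω p) := by
  rw [lamOm_eq K ω hKdown p]
  exact (Finsupp.domLCongr (eBasis K ω hKdown p)).bijective

lemma lamOm_single (hKdown : ∀ σ ∈ K, ∀ τ ⊆ σ, τ ∈ K) (p : ℕ) (b : TωB K ω p) (c : ℤ) :
    lamOm K ω p (Finsupp.single b c) =
      Finsupp.single (eBasis K ω hKdown p b) c := by
  rw [lamOm_eq K ω hKdown p]
  simp

lemma dTω_single (p : ℕ) (b : TωB K ω p) (c : ℤ) :
    dTω K ω p (Finsupp.single b c) = c • dTωaux K ω p b := by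
  rw [dTω, Finsupp.lift_apply, Finsupp.sum_single_index (by simp)]

lemma dCt_single (p : ℕ) (b : CtB K ω p) (c : ℤ) :
    dCt K ω p (Finsupp.single b c) = c • dCtaux K ω p b := by
  rw [dCt, Finsupp.lift_apply, Finsupp.sum_single_index (by simp)]

lemma lamOm_comm (hKdown : ∀ σ ∈ K, ∀ τ ⊆ σ, τ ∈ K) (p : ℕ) :
    (lamOm K ω (p + 1)).comp (dTω K ω p) = (dCt K ω p).comp (lamOm K ω p) := by
  apply Finsupp.lhom_ext
  intro b c
  obtain ⟨⟨σ, τ⟩, hσK, hdis, huni, hcard⟩ := b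
  have hτ : τ = ω \ σ := by
    rw [← huni, Finset.union_sdiff_cancel_left hdis]
  subst hτ
  have hσω : σ ⊆ ω := huni ▸ Finset.subset_union_left
  simp only [LinearMap.comp_apply]
  erw [lamOm_single K ω hKdown p, dTω_single, dCt_single, map_smul]
  congr 1
  delta dTωaux dCtaux
  rw [map_sum]
  apply Finset.sum_congr rfl
  intro i _
  have hiω : i.1 ∈ ω := (Finset.mem_sdiff.mp i.2).1
  by_cases h : insert i.1 σ ∈ K
  · rw [dif_pos h, dif_pos ⟨insert i.1 σ, h,
      Finset.inter_eq_left.mpr (Finset.insert_subset hiω hσω)⟩]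
    erw [lamOm_single K ω hKdown (p+1)]
    congr 1
  · rw [dif_neg h, dif_neg, map_zero]
    rintro ⟨s, hs, hsc⟩
    exact h (hKdown s hs _ (hsc ▸ Finset.inter_subset_left))

end Aux

section HgrpCongr

variable {M N : ℕ → Type} [∀ p, AddCommGroup (M p)] [∀ p, Module ℤ (M p)]
  [∀ p, AddCommGroup (N p)] [∀ p, Module ℤ (N p)]
  (dM : ∀ p, M p →ₗ[ℤ] M (p + 1)) (dN : ∀ p, N p →ₗ[ℤ] N (p + 1))
  (e : ∀ p, M p ≃ₗ[ℤ] N p)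

lemma Hgrp_congr
    (hcomm : ∀ p x, e (p + 1) (dM p x) = dN p (e p x)) (p : ℕ) :
    Nonempty (Hgrp dM p ≃+ Hgrp dN p) := by
  have hker : ∀ q x, x ∈ (dM q).toAddMonoidHom.ker ↔ e q x ∈ (dN q).toAddMonoidHom.ker := by
    intro q x
    simp only [AddMonoidHom.mem_ker, LinearMap.toAddMonoidHom_coe]
    rw [← hcomm q x]
    constructor
    · intro h; rw [h, map_zero]
    · intro h
      exact (e (q + 1)).injective (by rw [h, map_zero])
  have hrange : ∀ q x, x ∈ prevRange dM q ↔ e q x ∈ prevRange dN q := by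
    intro q x
    cases q with
    | zero =>
        simp only [prevRange, AddSubgroup.mem_bot]
        constructor
        · intro h; rw [h, map_zero]
        · intro h
          exact (e 0).injective (by rw [h, map_zero])
    | succ q =>
        simp only [prevRange, AddMonoidHom.mem_range, LinearMap.toAddMonoidHom_coe]
        constructor
        · rintro ⟨y, rfl⟩
          exact ⟨e q y, (hcomm q y).symm⟩
        · rintro ⟨y, hy⟩
          refine ⟨(e q).symm y, (e (q + 1)).injective ?_⟩
          rw [hcomm, LinearEquiv.apply_symm_apply, hy]
  -- equivalence of kernels
  have hmap : ((dM p).toAddMonoidHom.ker).map (e p).toAddEquiv.toAddMonoidHom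
      = (dN p).toAddMonoidHom.ker := by
    ext y
    constructor
    · rintro ⟨x, hx, rfl⟩
      exact (hker p x).mp hx
    · intro hy
      refine ⟨(e p).symm y, ?_, (e p).apply_symm_apply y⟩
      have hs : (e p) ((e p).symm y) = y := (e p).apply_symm_apply y
      show (e p).symm y ∈ (dM p).toAddMonoidHom.ker
      rw [hker p, hs]
      exact hy
  let eK : ((dM p).toAddMonoidHom.ker) ≃+ ((dN p).toAddMonoidHom.ker) :=
    ((e p).toAddEquiv.addSubgroupMap (dM p).toAddMonoidHom.ker).trans
      (AddEquiv.addSubgroupCongr hmap)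
  have heK : ∀ x : (dM p).toAddMonoidHom.ker, (eK x : N p) = e p x := fun x => rfl
  refine ⟨QuotientAddGroup.congr _ _ eK ?_⟩
  ext y
  simp only [AddSubgroup.mem_map]
  constructor
  · rintro ⟨x, hx, rfl⟩
    rw [AddSubgroup.mem_addSubgroupOf] at hx ⊢
    exact (hrange p x).mp hx
  · intro hy
    refine ⟨eK.symm y, ?_, by simp⟩
    rw [AddSubgroup.mem_addSubgroupOf] at hy ⊢
    have hsy : (e p) ((eK.symm y : M p)) = (y : N p) := by
      have h2 := congrArg Subtype.val (eK.apply_symm_apply y)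
      exact h2
    rw [hrange p, hsy]
    exact hy

end HgrpCongr

/-- `λ_ω` is an isomorphism of cochain complexes (bijective in each degree and commuting
with the differentials), and induces isomorphisms `H^p(T(K)|_ω) ≅ H̃^{p−1}(K_ω)`. -/
theorem lamOm_iso_of_complexes {m : ℕ} (K : Finset (Finset (Fin m)))
    (hKempty : (∅ : Finset (Fin m)) ∈ K)
    (hKdown : ∀ σ ∈ K, ∀ τ ⊆ σ, τ ∈ K) (ω : Finset (Fin m)) :
    (∀ p : ℕ, Function.Bijective (lamOm K ω p)) ∧
    (∀ p : ℕ, (lamOm K ω (p + 1)).comp (dTω K ω p) = (dCt K ω p).comp (lamOm K ω p)) ∧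
    (∀ p : ℕ, Nonempty (Hgrp (dTω K ω) p ≃+ Hgrp (dCt K ω) p)) := by
  refine ⟨lamOm_bijective K ω hKdown, lamOm_comm K ω hKdown, ?_⟩
  intro p
  refine Hgrp_congr (dTω K ω) (dCt K ω)
    (fun q => Finsupp.domLCongr (eBasis K ω hKdown q)) (fun q x => ?_) p
  have h := LinearMap.congr_fun (lamOm_comm K ω hKdown q) x
  simp only [LinearMap.comp_apply, lamOm_eq K ω hKdown, LinearEquiv.coe_coe] at h
  exact h
end

section
/- Let K be the full simplex on [m] (every subset of [m] is a simplex). Then the map θ sending the basis element (σ,τ) of T(K) to the tensor e_1 ⊗ ⋯ ⊗ e_m, where e_i = u if i ∈ σ, e_i = t if i ∈ τ, and e_i = 𝟙 otherwise, is an isomorphism of cochain complexes T(K) ≅ D^{⊗m} onto the m-fold tensor product of the complex D over ℤ. -/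
/-!
STATEMENT 12: Let `K` be the full simplex on `[m]`.  The map `θ` sending the basis
element `(σ,τ)` of `T(K)` to the tensor `e_1 ⊗ ⋯ ⊗ e_m` (with `e_i = u` for `i ∈ σ`,
`e_i = t` for `i ∈ τ`, `e_i = 𝟙` otherwise) is an isomorphism of cochain complexes
from `T(K)` onto the `m`-fold tensor product `D^{⊗m}` over `ℤ`, where `D` is the
cochain complex with `D^0 = ℤ𝟙 ⊕ ℤt`, `D^1 = ℤu`, `d(𝟙) = 0`, `d(t) = u`, and tensor
products carry the Koszul sign rule `d(x ⊗ y) = dx ⊗ y + (−1)^{deg x} x ⊗ dy`.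

`D^{⊗m}` is presented in its canonical basis: the degree-`p` piece is free on the
functions `e : Fin m → Fin 3` (values `0 ↦ 𝟙`, `1 ↦ t`, `2 ↦ u`) with exactly `p`
values equal to `u`, and the Koszul-sign differential replaces one `t` by a `u`:
`d(e) = Σ_{i : e i = t} (−1)^{#{j < i : e j = u}} e[i ↦ u]`.
-/

def TB {m : ℕ} (K : Finset (Finset (Fin m))) (p : ℕ) : Type :=
  {x : Finset (Fin m) × Finset (Fin m) // x.1 ∈ K ∧ Disjoint x.1 x.2 ∧ x.1.card = p}

noncomputable def dTaux {m : ℕ} (K : Finset (Finset (Fin m))) (p : ℕ) (b : TB K p) :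
    (TB K (p + 1) →₀ ℤ) :=
  ∑ i ∈ b.1.2.attach,
    if h : insert i.1 b.1.1 ∈ K then
      Finsupp.single
        ⟨(insert i.1 b.1.1, b.1.2.erase i.1),
          h,
          Finset.disjoint_insert_left.mpr
            ⟨Finset.notMem_erase _ _, b.2.2.1.mono_right (Finset.erase_subset _ _)⟩,
          by
            rw [Finset.card_insert_of_notMem (Finset.disjoint_right.mp b.2.2.1 i.2), b.2.2.2]⟩
        ((-1 : ℤ) ^ (b.1.1.filter (fun j => j < i.1)).card)
    else 0

noncomputable def dT {m : ℕ} (K : Finset (Finset (Fin m))) (p : ℕ) :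
    (TB K p →₀ ℤ) →ₗ[ℤ] (TB K (p + 1) →₀ ℤ) :=
  Finsupp.lift _ ℤ _ (dTaux K p)

/-- The canonical basis of the degree-`p` piece of `D^{⊗m}`: pure tensors
`e_1 ⊗ ⋯ ⊗ e_m` of basis vectors (`0 ↦ 𝟙`, `1 ↦ t`, `2 ↦ u`) of total degree `p`. -/
def KoszulB (m p : ℕ) : Type :=
  {e : Fin m → Fin 3 // (Finset.univ.filter fun i => e i = 2).card = p}

/-- The Koszul differential of `D^{⊗m}` on a pure tensor:
`d(e) = Σ_{i : e_i = t} (−1)^{#{j < i : e_j = u}} e[i ↦ u]`. -/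
noncomputable def dKoszulAux (m p : ℕ) (b : KoszulB m p) : (KoszulB m (p + 1) →₀ ℤ) :=
  ∑ i ∈ (Finset.univ.filter fun i => b.1 i = 1).attach,
    Finsupp.single
      ⟨Function.update b.1 i.1 2, by
        have hi : b.1 i.1 = 1 := (Finset.mem_filter.mp i.2).2
        have hset : (Finset.univ.filter fun j => Function.update b.1 i.1 2 j = 2)
            = insert i.1 (Finset.univ.filter fun j => b.1 j = 2) := by
          ext j
          rcases eq_or_ne j i.1 with rfl | hj
          · simp
          · simp [Function.update_of_ne hj, hj]
        rw [hset, Finset.card_insert_of_notMem (by simp [hi]), b.2]⟩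
      ((-1 : ℤ) ^ (Finset.univ.filter fun j => j < i.1 ∧ b.1 j = 2).card)

/-- The differential of `D^{⊗m}`. -/
noncomputable def dKoszul (m p : ℕ) :
    (KoszulB m p →₀ ℤ) →ₗ[ℤ] (KoszulB m (p + 1) →₀ ℤ) :=
  Finsupp.lift _ ℤ _ (dKoszulAux m p)

/-- The pure tensor associated with a basis element `(σ,τ)` of `T(K)`:
`e_i = u (= 2)` for `i ∈ σ`, `e_i = t (= 1)` for `i ∈ τ`, `e_i = 𝟙 (= 0)` otherwise. -/
def toKoszulFun {m : ℕ} (σ τ : Finset (Fin m)) : Fin m → Fin 3 :=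
  fun i => if i ∈ σ then 2 else if i ∈ τ then 1 else 0

/-- `θ : T(K)^p → (D^{⊗m})^p`, `(σ,τ) ↦ e_1 ⊗ ⋯ ⊗ e_m`. -/
noncomputable def theta {m : ℕ} (K : Finset (Finset (Fin m))) (p : ℕ) :
    (TB K p →₀ ℤ) →ₗ[ℤ] (KoszulB m p →₀ ℤ) :=
  Finsupp.lift _ ℤ _ (fun b =>
    Finsupp.single
      ⟨toKoszulFun b.1.1 b.1.2, by
        have h : (Finset.univ.filter fun i => toKoszulFun b.1.1 b.1.2 i = 2) = b.1.1 := by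
          ext i
          by_cases h1 : i ∈ b.1.1
          · simp [toKoszulFun, h1]
          · by_cases h2 : i ∈ b.1.2 <;> simp [toKoszulFun, h1, h2]
        rw [h, b.2.2.2]⟩
      (1 : ℤ))

/-- Auxiliary: the basis-level map underlying `theta`. -/
def thetaB {m : ℕ} {K : Finset (Finset (Fin m))} {p : ℕ} (b : TB K p) : KoszulB m p :=
  ⟨toKoszulFun b.1.1 b.1.2, by
    have h : (Finset.univ.filter fun i => toKoszulFun b.1.1 b.1.2 i = 2) = b.1.1 := by
      ext i
      by_cases h1 : i ∈ b.1.1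
      · simp [toKoszulFun, h1]
      · by_cases h2 : i ∈ b.1.2 <;> simp [toKoszulFun, h1, h2]
    rw [h, b.2.2.2]⟩

lemma thetaB_filter2 {m : ℕ} {K : Finset (Finset (Fin m))} {p : ℕ} (b : TB K p) :
    (Finset.univ.filter fun i => toKoszulFun b.1.1 b.1.2 i = 2) = b.1.1 := by
  ext i
  by_cases h1 : i ∈ b.1.1
  · simp [toKoszulFun, h1]
  · by_cases h2 : i ∈ b.1.2 <;> simp [toKoszulFun, h1, h2]

lemma thetaB_filter1 {m : ℕ} {K : Finset (Finset (Fin m))} {p : ℕ} (b : TB K p) :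
    (Finset.univ.filter fun i => toKoszulFun b.1.1 b.1.2 i = 1) = b.1.2 := by
  ext i
  rw [Finset.mem_filter]
  by_cases h1 : i ∈ b.1.1
  · have : i ∉ b.1.2 := Finset.disjoint_left.mp b.2.2.1 h1
    simp [toKoszulFun, h1, this]
  · by_cases h2 : i ∈ b.1.2 <;> simp [toKoszulFun, h1, h2]

lemma theta_single {m : ℕ} (K : Finset (Finset (Fin m))) (p : ℕ) (b : TB K p) (c : ℤ) :
    theta K p (Finsupp.single b c) = Finsupp.single (thetaB b) c := by
  simp [theta, thetaB, Finsupp.lift_apply, Finsupp.sum_single_index, Finsupp.smul_single]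
  exact Finsupp.smul_single_one _ _

lemma fin3_eq_zero (a : Fin 3) (h1 : a ≠ 1) (h2 : a ≠ 2) : a = 0 := by
  fin_cases a <;> simp_all

noncomputable def equivB {m : ℕ} (K : Finset (Finset (Fin m)))
    (hK : ∀ σ : Finset (Fin m), σ ∈ K) (p : ℕ) : TB K p ≃ KoszulB m p where
  toFun := thetaB
  invFun e :=
    ⟨(Finset.univ.filter fun i => e.1 i = 2, Finset.univ.filter fun i => e.1 i = 1),
      hK _, by
        rw [Finset.disjoint_left]
        intro a ha hb
        simp only [Finset.mem_filter] at ha hb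
        rw [ha.2] at hb
        exact absurd hb.2 (by decide), e.2⟩
  left_inv b := by
    apply Subtype.ext
    apply Prod.ext
    · exact thetaB_filter2 b
    · exact thetaB_filter1 b
  right_inv e := by
    apply Subtype.ext
    funext i
    simp only [thetaB, toKoszulFun, Finset.mem_filter, Finset.mem_univ, true_and]
    by_cases h2 : e.1 i = 2
    · simp [h2]
    · by_cases h1 : e.1 i = 1
      · simp [h1, h2]
      · simp [h1, h2, (fin3_eq_zero _ h1 h2).symm]

lemma theta_eq {m : ℕ} (K : Finset (Finset (Fin m)))
    (hK : ∀ σ : Finset (Fin m), σ ∈ K) (p : ℕ) :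
    theta K p = (Finsupp.domLCongr (M := ℤ) (R := ℤ) (equivB K hK p)).toLinearMap := by
  apply Finsupp.lhom_ext
  intro b c
  rw [theta_single]
  simp [equivB]
  rfl

lemma toKoszulFun_update {m : ℕ} (σ τ : Finset (Fin m))
    (a : Fin m) (ha : a ∈ τ) :
    toKoszulFun (insert a σ) (τ.erase a) = Function.update (toKoszulFun σ τ) a 2 := by
  funext j
  rcases eq_or_ne j a with rfl | hj
  · simp [toKoszulFun]
  · rw [Function.update_of_ne hj]
    simp [toKoszulFun, Finset.mem_insert, hj, Finset.mem_erase]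

lemma comm_single {m : ℕ} (K : Finset (Finset (Fin m)))
    (hK : ∀ σ : Finset (Fin m), σ ∈ K) (p : ℕ) (b : TB K p) :
    theta K (p + 1) (dTaux K p b) = dKoszulAux m p (thetaB b) := by
  have hmem : ∀ j, toKoszulFun b.1.1 b.1.2 j = 2 ↔ j ∈ b.1.1 := by
    intro j
    have := Finset.ext_iff.mp (thetaB_filter2 b) j
    simpa using this
  have hmem1 : ∀ j, toKoszulFun b.1.1 b.1.2 j = 1 ↔ j ∈ b.1.2 := by
    intro j
    have := Finset.ext_iff.mp (thetaB_filter1 b) j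
    simpa using this
  rw [dTaux, map_sum, dKoszulAux]
  refine Finset.sum_bij' (fun a _ => (⟨a.1, Finset.mem_filter.mpr
        ⟨Finset.mem_univ _, (hmem1 a.1).mpr a.2⟩⟩ :
        {x // x ∈ Finset.univ.filter fun i => (thetaB b).1 i = 1}))
      (fun a _ => (⟨a.1, (hmem1 a.1).mp (Finset.mem_filter.mp a.2).2⟩ : {x // x ∈ b.1.2}))
      (fun a _ => Finset.mem_attach _ _) (fun a _ => Finset.mem_attach _ _)
      (fun a _ => Subtype.ext rfl) (fun a _ => Subtype.ext rfl) ?_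
  intro a _
  rw [dif_pos (hK _)]
  refine (theta_single K (p + 1) _ _).trans ?_
  congr 1
  · apply Subtype.ext
    exact toKoszulFun_update b.1.1 b.1.2 a.1 a.2
  · congr 2
    ext j
    simp only [Finset.mem_filter, Finset.mem_univ, true_and]
    constructor
    · rintro ⟨h1, hlt⟩
      exact ⟨hlt, (hmem j).mpr h1⟩
    · rintro ⟨hlt, h1⟩
      exact ⟨(hmem j).mp h1, hlt⟩

/-- For the full simplex `K`, `θ` is an isomorphism of cochain complexes
`T(K) ≅ D^{⊗m}`: bijective in each degree and commuting with the differentials. -/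
theorem theta_iso_T_full_simplex_with_Koszul {m : ℕ} (K : Finset (Finset (Fin m)))
    (hKfull : ∀ σ : Finset (Fin m), σ ∈ K) :
    (∀ p : ℕ, Function.Bijective (theta K p)) ∧
    (∀ p : ℕ, (theta K (p + 1)).comp (dT K p) = (dKoszul m p).comp (theta K p)) := by
  constructor
  · intro p
    rw [theta_eq K hKfull p]
    exact (Finsupp.domLCongr (M := ℤ) (R := ℤ) (equivB K hKfull p)).bijective
  · intro p
    apply Finsupp.lhom_ext
    intro b c
    rw [LinearMap.comp_apply, LinearMap.comp_apply, theta_single]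
    have h1 : dT K p (Finsupp.single b c) = c • dTaux K p b := by
      simp [dT, Finsupp.lift_apply, Finsupp.sum_single_index]
    have h2 : dKoszul m p (Finsupp.single (thetaB b) c) = c • dKoszulAux m p (thetaB b) := by
      simp [dKoszul, Finsupp.lift_apply, Finsupp.sum_single_index]
    rw [h1, h2, map_smul, comm_single K hKfull]
end

section
/- If {i} ∈ K for every i ∈ [m], then H^0(T(K)) is infinite cyclic, generated by the class of the basis element (∅,∅): H^0(T(K)) ≅ ℤ. -/
instance {m : ℕ} {K : Finset (Finset (Fin m))} {p : ℕ} : DecidableEq (TB K p) :=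
  fun a b => decidable_of_iff (a.1 = b.1) Subtype.ext_iff.symm

lemma TB0_fst {m : ℕ} {K : Finset (Finset (Fin m))} (b : TB K 0) : b.1.1 = ∅ :=
  Finset.card_eq_zero.mp b.2.2.2

lemma ker_apply_eq_zero {m : ℕ} {K : Finset (Finset (Fin m))}
    (hvert : ∀ i : Fin m, ({i} : Finset (Fin m)) ∈ K)
    {f : TB K 0 →₀ ℤ} (hf : dT K 0 f = 0) (b : TB K 0) (hb : b.1.2 ≠ ∅) :
    f b = 0 := by
  obtain ⟨i, hi⟩ := Finset.nonempty_iff_ne_empty.mpr hb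
  have hbK : ({i} : Finset (Fin m)) ∈ K := hvert i
  have hdisj : Disjoint ({i} : Finset (Fin m)) (b.1.2.erase i) := by
    simp [Finset.disjoint_singleton_left]
  set c : TB K 1 := ⟨(({i} : Finset (Fin m)), b.1.2.erase i), hbK, hdisj, by simp⟩ with hc
  have hdta : ∀ a : TB K 0, dTaux K 0 a c = if a = b then 1 else 0 := by
    intro a
    have ha1 : a.1.1 = ∅ := TB0_fst a
    have hterm : ∀ j : {x // x ∈ a.1.2},
        ((if h : insert j.1 a.1.1 ∈ K then
          Finsupp.single
            ⟨(insert j.1 a.1.1, a.1.2.erase j.1), h,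
              Finset.disjoint_insert_left.mpr
                ⟨Finset.notMem_erase _ _, a.2.2.1.mono_right (Finset.erase_subset _ _)⟩,
              by rw [Finset.card_insert_of_notMem (Finset.disjoint_right.mp a.2.2.1 j.2),
                  a.2.2.2]⟩
            ((-1 : ℤ) ^ (a.1.1.filter (fun k => k < j.1)).card)
          else 0) : TB K 1 →₀ ℤ) c
        = if (j.1 = i ∧ a.1.2.erase j.1 = b.1.2.erase i) then (1 : ℤ) else 0 := by
      intro j
      have hjK : insert j.1 a.1.1 ∈ K := by
        rw [ha1, Finset.insert_empty]; exact hvert j.1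
      classical
      erw [dif_pos hjK, Finsupp.single_apply]
      have hsign : ((-1 : ℤ) ^ (a.1.1.filter (fun k => k < j.1)).card) = 1 := by
        rw [ha1]; simp
      rw [hsign]
      refine if_congr ?_ rfl rfl
      constructor
      · intro h
        have h' := congrArg Subtype.val h
        rw [hc] at h'
        rw [Prod.mk.injEq] at h'
        refine ⟨?_, h'.2⟩
        have := h'.1
        rw [ha1, Finset.insert_empty, Finset.singleton_inj] at this
        exact this
      · rintro ⟨h1, h2⟩
        refine Subtype.ext ?_
        show (insert (j : Fin m) a.1.1, a.1.2.erase (j : Fin m))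
          = (({i} : Finset (Fin m)), b.1.2.erase i)
        rw [h1] at h2
        rw [ha1, Finset.insert_empty, h1, h2]
    rw [dTaux, Finsupp.finset_sum_apply, Finset.sum_congr rfl (fun j _ => hterm j)]
    rw [Finset.sum_attach a.1.2
      (fun j => if (j = i ∧ a.1.2.erase j = b.1.2.erase i) then (1 : ℤ) else 0)]
    have step : ∀ j ∈ a.1.2, (if (j = i ∧ a.1.2.erase j = b.1.2.erase i) then (1:ℤ) else 0)
        = if j = i then (if a.1.2.erase i = b.1.2.erase i then (1:ℤ) else 0) else 0 := by
      intro j _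
      by_cases h : j = i
      · subst h; simp
      · simp [h]
    rw [Finset.sum_congr rfl step, Finset.sum_ite_eq' a.1.2 i]
    by_cases hab : a = b
    · subst hab; simp [hi]
    · have hn : ¬ (i ∈ a.1.2 ∧ a.1.2.erase i = b.1.2.erase i) := by
        rintro ⟨h1, h2⟩
        apply hab
        apply Subtype.ext
        apply Prod.ext
        · rw [ha1, TB0_fst b]
        · rw [← Finset.insert_erase h1, h2, Finset.insert_erase hi]
      rcases Classical.em (i ∈ a.1.2) with h1 | h1
      · rw [if_pos h1, if_neg (fun h2 => hn ⟨h1, h2⟩), if_neg hab]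
      · rw [if_neg h1, if_neg hab]
  have key : (dT K 0 f) c = f b := by
    rw [dT, Finsupp.lift_apply, Finsupp.sum_apply]
    have step : (f.sum fun a n => (n • dTaux K 0 a) c)
        = f.sum fun a n => if a = b then n else 0 :=
      Finsupp.sum_congr (fun a _ => by rw [Finsupp.smul_apply, hdta a]; split <;> simp)
    rw [step, Finsupp.sum_ite_self_eq' f b]
  rw [hf] at key
  exact key.symm

lemma d_single_empty {m : ℕ} {K : Finset (Finset (Fin m))}
    (hKempty : (∅ : Finset (Fin m)) ∈ K) :
    dT K 0 (Finsupp.single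
      (⟨(∅, ∅), hKempty, Finset.disjoint_empty_left _, Finset.card_empty⟩ : TB K 0)
      (1 : ℤ)) = 0 := by
  erw [dT, Finsupp.lift_apply, Finsupp.sum_single_index (by simp)]
  erw [one_smul, dTaux]
  simp

/-- If every singleton `{i}` is a simplex of `K`, then `H^0(T(K))` is infinite cyclic,
generated by the class of the basis element `(∅, ∅)`. -/
theorem H0_of_T_infinite_cyclic {m : ℕ} (K : Finset (Finset (Fin m)))
    (hKempty : (∅ : Finset (Fin m)) ∈ K)
    (hKdown : ∀ σ ∈ K, ∀ τ ⊆ σ, τ ∈ K)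
    (hvert : ∀ i : Fin m, ({i} : Finset (Fin m)) ∈ K) :
    ∃ h : (Finsupp.single
        (⟨(∅, ∅), hKempty, Finset.disjoint_empty_left _, Finset.card_empty⟩ : TB K 0)
        (1 : ℤ)) ∈ (dT K 0).toAddMonoidHom.ker,
      (∀ x : Hgrp (dT K) 0, ∃ n : ℤ,
          x = n • (QuotientAddGroup.mk ⟨_, h⟩ : Hgrp (dT K) 0)) ∧
      (∀ n : ℤ, n • (QuotientAddGroup.mk ⟨_, h⟩ : Hgrp (dT K) 0) = 0 → n = 0) ∧
      Nonempty (Hgrp (dT K) 0 ≃+ ℤ) := by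
  set b₀ : TB K 0 := ⟨(∅, ∅), hKempty, Finset.disjoint_empty_left _, Finset.card_empty⟩
    with hb₀
  have h : Finsupp.single b₀ (1 : ℤ) ∈ (dT K 0).toAddMonoidHom.ker := by
    rw [AddMonoidHom.mem_ker]
    exact d_single_empty hKempty
  set g : (dT K 0).toAddMonoidHom.ker := ⟨Finsupp.single b₀ (1 : ℤ), h⟩ with hg
  -- every kernel element is a multiple of g
  have hzval : ∀ z : (dT K 0).toAddMonoidHom.ker, z = (z.1 b₀) • g := by
    intro z
    have hz0 : dT K 0 z.1 = 0 := z.2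
    apply Subtype.ext
    have : ((z.1 b₀ • g : (dT K 0).toAddMonoidHom.ker) : TB K 0 →₀ ℤ)
        = z.1 b₀ • Finsupp.single b₀ (1 : ℤ) := rfl
    rw [this]
    ext b
    by_cases hbb : b = b₀
    · subst hbb; simp
    · have hbne : b.1.2 ≠ ∅ := by
        intro hemp
        apply hbb
        apply Subtype.ext
        apply Prod.ext
        · rw [TB0_fst b]
        · rw [hemp]
      rw [ker_apply_eq_zero hvert hz0 b hbne, Finsupp.smul_apply]
      rw [Finsupp.single_eq_of_ne' (fun hh => hbb hh.symm), smul_zero]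
  have gen : ∀ x : Hgrp (dT K) 0, ∃ n : ℤ,
      x = n • (QuotientAddGroup.mk g : Hgrp (dT K) 0) := by
    intro x
    induction x using QuotientAddGroup.induction_on with
    | H z =>
      refine ⟨z.1 b₀, ?_⟩
      have h1 : (QuotientAddGroup.mk z : Hgrp (dT K) 0)
          = QuotientAddGroup.mk ((z.1 b₀) • g) := congrArg _ (hzval z)
      rw [h1]
      exact map_zsmul (QuotientAddGroup.mk'
        ((prevRange (dT K) 0).addSubgroupOf (dT K 0).toAddMonoidHom.ker)) _ g
  have tf : ∀ n : ℤ, n • (QuotientAddGroup.mk g : Hgrp (dT K) 0) = 0 → n = 0 := by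
    intro n hn
    have hn' : (QuotientAddGroup.mk (n • g) : Hgrp (dT K) 0) = 0 := by
      rw [← hn]
      exact map_zsmul (QuotientAddGroup.mk'
        ((prevRange (dT K) 0).addSubgroupOf (dT K 0).toAddMonoidHom.ker)) n g
    rw [QuotientAddGroup.eq_zero_iff, AddSubgroup.mem_addSubgroupOf] at hn'
    replace hn := hn'
    have hmem : (↑(n • g) : TB K 0 →₀ ℤ) ∈ (⊥ : AddSubgroup (TB K 0 →₀ ℤ)) := hn
    have hbot : (↑(n • g) : TB K 0 →₀ ℤ) = 0 := AddSubgroup.mem_bot.mp hmem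
    have := DFunLike.congr_fun hbot b₀
    simpa [hg] using this
  refine ⟨h, gen, tf, ?_⟩
  have hbij : Function.Bijective
      ((zmultiplesHom (Hgrp (dT K) 0)) (QuotientAddGroup.mk g : Hgrp (dT K) 0)) := by
    constructor
    · refine (injective_iff_map_eq_zero _).mpr fun n hn => tf n ?_
      simpa using hn
    · intro x
      obtain ⟨n, hx⟩ := gen x
      exact ⟨n, by simpa using hx.symm⟩
  exact ⟨(AddEquiv.ofBijective _ hbij).symm⟩
end
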